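/- arXiv:1306.4211 — 8 statements merged into one kernel-verified Lean document; each statement's English description precedes it below -/
import Mathlib

section
/- Let g ≥ 1 be an integer. For every ε > 0 and every finite subset F of the surface group Γ_g there exists δ > 0 with the following property: whenever A is a unital C*-algebra and u_1, v_1, …, u_g, v_g are unitaries in A satisfying ‖∏_{i=1}^g [u_i, v_i] − 1‖ < δ, there exists an (F, ε)-representation π : Γ_g → U(A) such that π(α_i) = u_i and π(β_i) = v_i for all i ∈ {1, …, g}. -/
open scoped commutatorElement

/-- The surface group relator `∏ᵢ [αᵢ, βᵢ]` in the free group on `Fin g × Bool`,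
where `(i, false)` stands for `αᵢ` and `(i, true)` for `βᵢ`. -/
def surfaceRelator (g : ℕ) : FreeGroup (Fin g × Bool) :=
  (List.ofFn fun i : Fin g =>
    ⁅FreeGroup.of ((i, false) : Fin g × Bool), FreeGroup.of ((i, true) : Fin g × Bool)⁆).prod

/-- The surface group `Γ_g = ⟨α₁, β₁, …, α_g, β_g | ∏ᵢ [αᵢ, βᵢ]⟩`. -/
def SurfaceGroup (g : ℕ) : Type :=
  PresentedGroup {surfaceRelator g}

instance (g : ℕ) : Group (SurfaceGroup g) :=
  inferInstanceAs (Group (PresentedGroup {surfaceRelator g}))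

/-- The generator `αᵢ` of the surface group. -/
def sgA {g : ℕ} (i : Fin g) : SurfaceGroup g :=
  PresentedGroup.of (i, false)

/-- The generator `βᵢ` of the surface group. -/
def sgB {g : ℕ} (i : Fin g) : SurfaceGroup g :=
  PresentedGroup.of (i, true)

set_option linter.unusedSectionVars false

lemma lift_surfaceRelator {g : ℕ} {G : Type*} [Group G] (f : Fin g × Bool → G) :
    FreeGroup.lift f (surfaceRelator g) =
      (List.ofFn fun i : Fin g => ⁅f (i, false), f (i, true)⁆).prod := by
  unfold surfaceRelator
  rw [map_list_prod, List.map_ofFn]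
  have h : (⇑(FreeGroup.lift f) ∘ fun i : Fin g =>
      ⁅FreeGroup.of ((i, false) : Fin g × Bool), FreeGroup.of ((i, true) : Fin g × Bool)⁆) =
      fun i : Fin g => ⁅f (i, false), f (i, true)⁆ := by
    funext i
    simp [Function.comp, map_commutatorElement]
  rw [h]

noncomputable def sgChi (g : ℕ) : SurfaceGroup g →* Multiplicative (Fin g × Bool →₀ ℤ) :=
  PresentedGroup.toGroup (f := fun p => Multiplicative.ofAdd (Finsupp.single p 1)) (by
    intro r hr
    rw [Set.mem_singleton_iff] at hr
    subst hr
    rw [lift_surfaceRelator]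
    refine List.prod_eq_one ?_
    intro x hx
    rw [List.mem_ofFn] at hx
    obtain ⟨i, rfl⟩ := hx
    exact commutatorElement_eq_one_iff_mul_comm.mpr (mul_comm _ _))

lemma sgChi_of {g : ℕ} (p : Fin g × Bool) :
    sgChi g (PresentedGroup.of p) = Multiplicative.ofAdd (Finsupp.single p 1) :=
  PresentedGroup.toGroup.of _

lemma sg_of_injective {g : ℕ} {p q : Fin g × Bool}
    (h : (PresentedGroup.of p : SurfaceGroup g) = PresentedGroup.of q) : p = q := by
  have h2 := congrArg (sgChi g) h
  rw [sgChi_of, sgChi_of] at h2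
  exact Finsupp.single_left_injective one_ne_zero (Multiplicative.ofAdd.injective h2)

lemma sg_of_ne_one {g : ℕ} (p : Fin g × Bool) :
    (PresentedGroup.of p : SurfaceGroup g) ≠ 1 := by
  intro h
  have h2 := congrArg (sgChi g) h
  rw [sgChi_of] at h2
  exact one_ne_zero (Finsupp.single_eq_zero.mp (Multiplicative.ofAdd.injective (h2.trans (map_one (sgChi g)))))

lemma exists_sgSection {g : ℕ} (x : SurfaceGroup g) :
    ∃ w : FreeGroup (Fin g × Bool),
      PresentedGroup.mk {surfaceRelator g} w = x ∧
      (x = 1 → w = 1) ∧ (∀ i : Fin g, x = sgA i → w = FreeGroup.of (i, false)) ∧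
      (∀ i : Fin g, x = sgB i → w = FreeGroup.of (i, true)) := by
  by_cases h1 : x = 1
  · refine ⟨1, by simp [h1]; rfl, fun _ => rfl, fun i hi => ?_, fun i hi => ?_⟩
    · exact absurd (h1 ▸ hi).symm (sg_of_ne_one _)
    · exact absurd (h1 ▸ hi).symm (sg_of_ne_one _)
  · by_cases h2 : ∃ i, x = sgA i
    · obtain ⟨i, rfl⟩ := h2
      refine ⟨FreeGroup.of (i, false), rfl, fun h => absurd h h1, fun j hj => ?_, fun j hj => ?_⟩
      · cases sg_of_injective (g := g) hj; rfl
      · cases sg_of_injective (g := g) hj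
    · by_cases h3 : ∃ i, x = sgB i
      · obtain ⟨i, rfl⟩ := h3
        refine ⟨FreeGroup.of (i, true), rfl, fun h => absurd h h1, fun j hj => ?_, fun j hj => ?_⟩
        · cases sg_of_injective (g := g) hj
        · cases sg_of_injective (g := g) hj; rfl
      · obtain ⟨w, hw⟩ := PresentedGroup.mk_surjective {surfaceRelator g} x
        exact ⟨w, hw, fun h => absurd h h1, fun j hj => absurd ⟨j, hj⟩ h2,
          fun j hj => absurd ⟨j, hj⟩ h3⟩

section CStar
variable {A : Type*} [NormedRing A] [StarRing A] [CStarRing A]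

lemma unitary_coe_mul_inv_cancel (w : unitary A) :
    (w : A) * ((w⁻¹ : unitary A) : A) = 1 := by
  rw [← Submonoid.coe_mul, mul_inv_cancel, OneMemClass.coe_one]

lemma unitary_coe_inv_mul_cancel (w : unitary A) :
    ((w⁻¹ : unitary A) : A) * (w : A) = 1 := by
  rw [← Submonoid.coe_mul, inv_mul_cancel, OneMemClass.coe_one]

lemma norm_unitary_conj_sub_one (w x : unitary A) :
    ‖((w * x * w⁻¹ : unitary A) : A) - 1‖ = ‖(x : A) - 1‖ := by
  have h1 : ((w * x * w⁻¹ : unitary A) : A) - 1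
      = (w : A) * ((x : A) - 1) * ((w⁻¹ : unitary A) : A) := by
    rw [mul_sub, sub_mul, mul_one, unitary_coe_mul_inv_cancel]
    simp [Submonoid.coe_mul, mul_assoc]
  rw [h1, CStarRing.norm_mul_coe_unitary, CStarRing.norm_coe_unitary_mul]

lemma norm_unitary_star_sub_one (x : unitary A) :
    ‖star (x : A) - 1‖ = ‖(x : A) - 1‖ := by
  rw [← norm_star ((x : A) - 1), star_sub, star_one]

lemma norm_unitary_prod_sub_one (l : List (unitary A)) :
    ‖((l.prod : unitary A) : A) - 1‖ ≤ (l.map fun c : unitary A => ‖(c : A) - 1‖).sum := by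
  induction l with
  | nil => simp
  | cons a l ih =>
    rw [List.prod_cons, List.map_cons, List.sum_cons]
    have h1 : ((a * l.prod : unitary A) : A) - 1
        = (a : A) * (((l.prod : unitary A) : A) - 1) + ((a : A) - 1) := by
      rw [mul_sub, mul_one, Submonoid.coe_mul]
      abel
    rw [h1]
    calc ‖(a : A) * (((l.prod : unitary A) : A) - 1) + ((a : A) - 1)‖
        ≤ ‖(a : A) * (((l.prod : unitary A) : A) - 1)‖ + ‖(a : A) - 1‖ := norm_add_le _ _
      _ = ‖((l.prod : unitary A) : A) - 1‖ + ‖(a : A) - 1‖ := by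
          rw [CStarRing.norm_coe_unitary_mul]
      _ ≤ (l.map fun c : unitary A => ‖(c : A) - 1‖).sum + ‖(a : A) - 1‖ := by linarith
      _ = ‖(a : A) - 1‖ + (l.map fun c : unitary A => ‖(c : A) - 1‖).sum := by ring

lemma norm_unitary_mul_inv_sub_one (a b : unitary A) :
    ‖((a * b⁻¹ : unitary A) : A) - 1‖ = ‖(a : A) - (b : A)‖ := by
  have h1 : (((a * b⁻¹ : unitary A) : A) - 1) * (b : A) = (a : A) - (b : A) := by
    rw [sub_mul, one_mul, Submonoid.coe_mul, mul_assoc, unitary_coe_inv_mul_cancel, mul_one]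
  rw [← CStarRing.norm_mul_coe_unitary (((a * b⁻¹ : unitary A) : A) - 1) b, h1]

end CStar

/-- `π : G → U(A)` is an `(F, ε)`-representation: `π(1) = 1`,
`‖π(s⁻¹) - π(s)*‖ < ε` and `‖π(st) - π(s)π(t)‖ < ε` for all `s, t ∈ F`. -/
def IsQuasiRep {G : Type*} [Group G] {A : Type*} [NormedRing A] [StarRing A]
    (F : Set G) (ε : ℝ) (π : G → unitary A) : Prop :=
  π 1 = 1 ∧
  (∀ s ∈ F, ‖((π s⁻¹ : A)) - star ((π s : A))‖ < ε) ∧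
  (∀ s ∈ F, ∀ t ∈ F, ‖((π (s * t) : A)) - (π s : A) * (π t : A)‖ < ε)

/-- For every `ε > 0` and finite `F ⊆ Γ_g` there is `δ > 0` such that whenever unitaries
`u₁, v₁, …, u_g, v_g` in a unital C*-algebra `A` satisfy `‖∏ᵢ [uᵢ, vᵢ] - 1‖ < δ`,
there is an `(F, ε)`-representation `π : Γ_g → U(A)` with `π(αᵢ) = uᵢ`, `π(βᵢ) = vᵢ`. -/
theorem statement0 (g : ℕ) (hg : 1 ≤ g) (ε : ℝ) (hε : 0 < ε)
    (F : Finset (SurfaceGroup g)) :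
    ∃ δ > (0 : ℝ),
      ∀ (A : Type*) [NormedRing A] [StarRing A] [CStarRing A] [NormedAlgebra ℂ A]
        [CompleteSpace A] [StarModule ℂ A],
        ∀ u v : Fin g → unitary A,
          ‖(((List.ofFn fun i : Fin g => ⁅u i, v i⁆).prod : unitary A) : A) - 1‖ < δ →
          ∃ π : SurfaceGroup g → unitary A,
            IsQuasiRep (↑F) ε π ∧
            (∀ i : Fin g, π (sgA i) = u i) ∧ (∀ i : Fin g, π (sgB i) = v i) := by
  classical
  choose σ hσmk hσ1 hσA hσB using exists_sgSection (g := g)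
  set r : FreeGroup (Fin g × Bool) := surfaceRelator g with hrdef
  set S : Set (FreeGroup (Fin g × Bool)) := Group.conjugatesOfSet {r} with hSdef
  -- elements mapping to 1 lie in the submonoid closure of S ∪ S⁻¹
  have hker : ∀ w : FreeGroup (Fin g × Bool),
      PresentedGroup.mk {r} w = (1 : SurfaceGroup g) → w ∈ Submonoid.closure (S ∪ S⁻¹) := by
    intro w hw
    have hN : w ∈ Subgroup.normalClosure {r} := (QuotientGroup.eq_one_iff w).mp hw
    have h2 : w ∈ Subgroup.closure S := hN
    rw [← Subgroup.mem_toSubmonoid, Subgroup.closure_toSubmonoid] at h2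
    exact h2
  have hprodmem : ∀ x y : SurfaceGroup g,
      σ x * σ y * (σ (x * y))⁻¹ ∈ Submonoid.closure (S ∪ S⁻¹) := by
    intro x y
    refine hker _ ?_
    rw [map_mul, map_mul, map_inv, hσmk, hσmk, hσmk]; exact mul_inv_cancel _
  have hinvmem : ∀ x : SurfaceGroup g,
      σ x⁻¹ * σ x ∈ Submonoid.closure (S ∪ S⁻¹) := by
    intro x
    refine hker _ ?_
    rw [map_mul, hσmk, hσmk]; exact inv_mul_cancel _
  choose lp hlp1 hlp2 using fun x y => Submonoid.exists_list_of_mem_closure (hprodmem x y)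
  choose li hli1 hli2 using fun x => Submonoid.exists_list_of_mem_closure (hinvmem x)
  set L : ℕ := ((F ×ˢ F).sup fun p => (lp p.1 p.2).length) ⊔ (F.sup fun x => (li x).length)
    with hLdef
  refine ⟨ε / (L + 1), by positivity, ?_⟩
  intro A _ _ _ _ _ _ u v huv
  set f : Fin g × Bool → unitary A := fun p => if p.2 then v p.1 else u p.1 with hf
  set φ : FreeGroup (Fin g × Bool) →* unitary A := FreeGroup.lift f with hφ
  have hφr : φ r = (List.ofFn fun i : Fin g => ⁅u i, v i⁆).prod := by
    rw [hφ, hrdef, lift_surfaceRelator]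
    congr 1
  set d : ℝ := ‖((φ r : unitary A) : A) - 1‖ with hd
  have hdlt : d < ε / (L + 1) := by rw [hd, hφr]; exact huv
  have hd0 : 0 ≤ d := norm_nonneg _
  -- each conjugate maps to something at distance d from 1
  have hconj : ∀ c ∈ S ∪ S⁻¹, ‖((φ c : unitary A) : A) - 1‖ = d := by
    intro c hc
    rcases hc with hc | hc
    · rw [hSdef, Group.mem_conjugatesOfSet_iff] at hc
      obtain ⟨a, ha, hac⟩ := hc
      rw [Set.mem_singleton_iff] at ha; subst ha
      obtain ⟨t, ht⟩ := isConj_iff.mp hac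
      subst ht
      rw [map_mul, map_mul, map_inv, norm_unitary_conj_sub_one]
    · rw [Set.mem_inv, hSdef, Group.mem_conjugatesOfSet_iff] at hc
      obtain ⟨a, ha, hac⟩ := hc
      rw [Set.mem_singleton_iff] at ha; subst ha
      obtain ⟨t, ht⟩ := isConj_iff.mp hac
      have hc' : c = t * r⁻¹ * t⁻¹ := by
        rw [← inv_inv c, ← ht]
        simp [mul_inv_rev, mul_assoc]
      rw [hc', map_mul, map_mul, map_inv, map_inv, norm_unitary_conj_sub_one]
      rw [show (((φ r)⁻¹ : unitary A) : A) = star ((φ r : unitary A) : A) from rfl,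
        norm_unitary_star_sub_one]
  -- main estimate
  have hbound : ∀ (l : List (FreeGroup (Fin g × Bool))), (∀ y ∈ l, y ∈ S ∪ S⁻¹) →
      l.length ≤ L → ‖((φ l.prod : unitary A) : A) - 1‖ < ε := by
    intro l hl hlen
    have h1 : φ l.prod = (l.map φ).prod := map_list_prod φ l
    have h2 : ‖(((l.map φ).prod : unitary A) : A) - 1‖
        ≤ ((l.map φ).map fun c : unitary A => ‖(c : A) - 1‖).sum :=
      norm_unitary_prod_sub_one _
    have h3 : ((l.map φ).map fun c : unitary A => ‖(c : A) - 1‖).sum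
        ≤ ((l.map φ).map fun c : unitary A => ‖(c : A) - 1‖).length • d := by
      refine List.sum_le_card_nsmul _ d ?_
      intro x hx
      simp only [List.mem_map] at hx
      obtain ⟨c, ⟨y, hy, rfl⟩, rfl⟩ := hx
      exact le_of_eq (hconj y (hl y hy))
    have h4 : ((l.map φ).map fun c : unitary A => ‖(c : A) - 1‖).length = l.length := by
      simp
    rw [h1]
    calc ‖(((l.map φ).prod : unitary A) : A) - 1‖
        ≤ ((l.map φ).map fun c : unitary A => ‖(c : A) - 1‖).sum := h2
      _ ≤ l.length • d := by rw [← h4]; exact h3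
      _ = (l.length : ℝ) * d := nsmul_eq_mul _ _
      _ ≤ (L : ℝ) * d := by
          apply mul_le_mul_of_nonneg_right _ hd0
          exact_mod_cast hlen
      _ ≤ (L : ℝ) * (ε / (L + 1)) := mul_le_mul_of_nonneg_left hdlt.le (by positivity)
      _ < (L + 1 : ℝ) * (ε / (L + 1)) := by
          apply mul_lt_mul_of_pos_right _ (by positivity)
          linarith
      _ = ε := by field_simp
  refine ⟨fun x => φ (σ x), ⟨?_, ?_, ?_⟩, ?_, ?_⟩
  · show φ (σ 1) = 1
    rw [hσ1 1 rfl, map_one]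
  · -- inverse condition
    intro s hs
    rw [Finset.mem_coe] at hs
    have hlen : (li s).length ≤ L := by
      rw [hLdef]
      exact le_sup_of_le_right (Finset.le_sup (f := fun x => (li x).length) hs)
    have h1 := hbound (li s) (hli1 s) hlen
    rw [hli2 s] at h1
    have h2 : φ (σ s⁻¹ * σ s) = φ (σ s⁻¹) * ((φ (σ s))⁻¹)⁻¹ := by
      rw [map_mul, inv_inv]
    rw [h2, norm_unitary_mul_inv_sub_one] at h1
    exact h1
  · -- multiplicativity
    intro s hs t ht
    rw [Finset.mem_coe] at hs ht
    have hlen : (lp s t).length ≤ L := by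
      rw [hLdef]
      refine le_sup_of_le_left (Finset.le_sup (f := fun p => (lp p.1 p.2).length)
        (Finset.mk_mem_product hs ht))
    have h1 := hbound (lp s t) (hlp1 s t) hlen
    rw [hlp2 s t] at h1
    have h2 : φ (σ s * σ t * (σ (s * t))⁻¹) = (φ (σ s) * φ (σ t)) * (φ (σ (s * t)))⁻¹ := by
      rw [map_mul, map_mul, map_inv]
    rw [h2, norm_unitary_mul_inv_sub_one, Submonoid.coe_mul] at h1
    rw [norm_sub_rev]
    exact h1
  · intro i
    show φ (σ (sgA i)) = u i
    rw [hσA (sgA i) i rfl, hφ, FreeGroup.lift_apply_of]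
    simp [hf]
  · intro i
    show φ (σ (sgB i)) = v i
    rw [hσB (sgB i) i rfl, hφ, FreeGroup.lift_apply_of]
    simp [hf]
end

section
/- Let g ≥ 1 and let q : F_{2g} → Γ_g be the canonical quotient homomorphism from the free group F_{2g} on generators α̂_1, β̂_1, …, α̂_g, β̂_g onto the surface group Γ_g, sending α̂_k to α_k and β̂_k to β_k. There exists a set-theoretic section s : Γ_g → F_{2g} of q with s(1) = 1, s(α_k) = α̂_k and s(β_k) = β̂_k for all k, such that for every ε > 0 and every finite subset F ⊆ Γ_g there exists δ > 0 (depending only on g, F and ε, and not on A) with the following property: for every unital C*-algebra A and all unitaries u_1, v_1, …, u_g, v_g ∈ U(A) satisfying ‖∏_{k=1}^g [u_k, v_k] − 1‖ < δ, the composite π = π̂ ∘ s is an (F, ε)-representation of Γ_g in U(A) with π(α_k) = u_k and π(β_k) = v_k for all k, where π̂ : F_{2g} → U(A) is the unique group homomorphism with π̂(α̂_k) = u_k and π̂(β̂_k) = v_k. -/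
open scoped commutatorElement

/-- The canonical quotient homomorphism `q : F_{2g} → Γ_g`. -/
def sgProj (g : ℕ) : FreeGroup (Fin g × Bool) →* SurfaceGroup g :=
  PresentedGroup.mk {surfaceRelator g}

/-- The unique homomorphism `π̂ : F_{2g} → U(A)` with `π̂(α̂ₖ) = uₖ`, `π̂(β̂ₖ) = vₖ`. -/
noncomputable def hatPi {g : ℕ} {A : Type*} [NormedRing A] [StarRing A]
    (u v : Fin g → unitary A) : FreeGroup (Fin g × Bool) →* unitary A :=
  FreeGroup.lift fun p : Fin g × Bool => if p.2 then v p.1 else u p.1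

section NormLemmas
variable {A : Type*} [NormedRing A] [StarRing A] [CStarRing A]

lemma norm_mul_unitary (a : A) (y : unitary A) : ‖a * (y : A)‖ = ‖a‖ := by
  have h : (a * (y : A)) * star (a * (y : A)) = a * star a := by
    rw [star_mul, mul_assoc, ← mul_assoc (y : A), Unitary.mul_star_self_of_mem y.prop, one_mul]
  have h2 : ‖a * (y : A)‖ * ‖a * (y : A)‖ = ‖a‖ * ‖a‖ := by
    rw [← CStarRing.norm_self_mul_star, h, CStarRing.norm_self_mul_star]
  exact (mul_self_inj (norm_nonneg _) (norm_nonneg _)).mp h2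

lemma norm_unitary_mul (y : unitary A) (a : A) : ‖(y : A) * a‖ = ‖a‖ := by
  rw [← norm_star, star_mul, ← Unitary.coe_star, norm_mul_unitary, norm_star]

lemma norm_mul_sub_one (x y : unitary A) :
    ‖((x * y : unitary A) : A) - 1‖ ≤ ‖(x : A) - 1‖ + ‖(y : A) - 1‖ := by
  have : ((x * y : unitary A) : A) - 1 = ((x : A) - 1) * (y : A) + ((y : A) - 1) := by
    push_cast; noncomm_ring
  rw [this]
  exact le_trans (norm_add_le _ _) (by rw [norm_mul_unitary])

lemma norm_inv_sub_one (x : unitary A) :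
    ‖((x⁻¹ : unitary A) : A) - 1‖ = ‖(x : A) - 1‖ := by
  rw [← Unitary.star_eq_inv, Unitary.coe_star]
  rw [show star (x : A) - 1 = star ((x : A) - 1) by simp, norm_star]

lemma norm_mul_inv_sub_one (x y : unitary A) :
    ‖((x * y⁻¹ : unitary A) : A) - 1‖ = ‖(x : A) - (y : A)‖ := by
  rw [← norm_mul_unitary (((x * y⁻¹ : unitary A) : A) - 1) y]
  congr 1
  push_cast
  rw [sub_mul, one_mul, mul_assoc, ← MulMemClass.coe_mul, inv_mul_cancel]
  simp

lemma norm_conj_sub_one (c x : unitary A) :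
    ‖((c * x * c⁻¹ : unitary A) : A) - 1‖ = ‖(x : A) - 1‖ := by
  have h1 : (c : A) * ((c⁻¹ : unitary A) : A) = 1 := by
    rw [← MulMemClass.coe_mul, mul_inv_cancel]; rfl
  have : ((c * x * c⁻¹ : unitary A) : A) - 1
      = (c : A) * (((x : A) - 1) * ((c⁻¹ : unitary A) : A)) := by
    simp only [MulMemClass.coe_mul]
    rw [sub_mul, one_mul, mul_sub, ← mul_assoc, h1, mul_assoc]
  rw [this, norm_unitary_mul, norm_mul_unitary]

end NormLemmas

section SurfaceAux

/-- Abelianization map used to distinguish generators. -/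
noncomputable def sgAb (g : ℕ) : SurfaceGroup g →* Multiplicative ((Fin g × Bool) →₀ ℤ) :=
  PresentedGroup.toGroup (f := fun p => Multiplicative.ofAdd (Finsupp.single p 1)) (by
    intro r hr
    rw [Set.mem_singleton_iff] at hr; subst hr
    rw [surfaceRelator, map_list_prod]
    apply List.prod_eq_one
    intro x hx
    rw [List.map_ofFn] at hx
    obtain ⟨i, rfl⟩ := List.mem_ofFn.mp hx
    simp only [Function.comp_apply, map_commutatorElement]
    exact commutatorElement_eq_one_iff_commute.mpr (Commute.all _ _))

lemma sgAb_A {g : ℕ} (k : Fin g) :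
    sgAb g (sgA k) = Multiplicative.ofAdd (Finsupp.single ((k, false) : Fin g × Bool) 1) :=
  PresentedGroup.toGroup.of _

lemma sgAb_B {g : ℕ} (k : Fin g) :
    sgAb g (sgB k) = Multiplicative.ofAdd (Finsupp.single ((k, true) : Fin g × Bool) 1) :=
  PresentedGroup.toGroup.of _

lemma single_pair_eq {g : ℕ} {p q : Fin g × Bool}
    (h : Multiplicative.ofAdd (Finsupp.single p (1:ℤ)) = Multiplicative.ofAdd (Finsupp.single q 1)) :
    p = q := by
  have := Multiplicative.ofAdd.injective h
  rcases (Finsupp.single_eq_single_iff _ _ _ _).mp this with ⟨h1, _⟩ | ⟨h1, _⟩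
  · exact h1
  · exact absurd h1 one_ne_zero

lemma sgA_ne_one {g : ℕ} (k : Fin g) : sgA k ≠ 1 := by
  intro h
  have h2 := congrArg (sgAb g) h
  rw [sgAb_A, map_one] at h2
  have := Multiplicative.ofAdd.injective h2
  exact one_ne_zero (Finsupp.single_eq_zero.mp this)

lemma sgB_ne_one {g : ℕ} (k : Fin g) : sgB k ≠ 1 := by
  intro h
  have h2 := congrArg (sgAb g) h
  rw [sgAb_B, map_one] at h2
  have := Multiplicative.ofAdd.injective h2
  exact one_ne_zero (Finsupp.single_eq_zero.mp this)

lemma sgB_ne_sgA {g : ℕ} (k j : Fin g) : sgB k ≠ sgA j := by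
  intro h
  have h2 := congrArg (sgAb g) h
  rw [sgAb_A, sgAb_B] at h2
  exact Bool.true_eq_false.mp (congrArg Prod.snd (single_pair_eq h2))

lemma sgA_inj {g : ℕ} {k j : Fin g} (h : sgA k = sgA (g := g) j) : k = j := by
  have h2 := congrArg (sgAb g) h
  rw [sgAb_A, sgAb_A] at h2
  exact congrArg Prod.fst (single_pair_eq h2)

lemma sgB_inj {g : ℕ} {k j : Fin g} (h : sgB k = sgB (g := g) j) : k = j := by
  have h2 := congrArg (sgAb g) h
  rw [sgAb_B, sgAb_B] at h2
  exact congrArg Prod.fst (single_pair_eq h2)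

open Classical in
/-- The section of `sgProj`. -/
noncomputable def sgSec (g : ℕ) : SurfaceGroup g → FreeGroup (Fin g × Bool) := fun x =>
  if x = 1 then 1
  else if h : ∃ k, x = sgA k then FreeGroup.of (h.choose, false)
  else if h : ∃ k, x = sgB k then FreeGroup.of (h.choose, true)
  else (PresentedGroup.mk_surjective _ x).choose

lemma sgProj_sgSec (g : ℕ) (x : SurfaceGroup g) : sgProj g (sgSec g x) = x := by
  unfold sgSec
  split_ifs with h0 h1 h2
  · rw [map_one, h0]
  · exact h1.choose_spec.symm
  · exact h2.choose_spec.symm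
  · exact (PresentedGroup.mk_surjective _ x).choose_spec

lemma sgSec_one (g : ℕ) : sgSec g 1 = 1 := if_pos rfl

lemma sgSec_A {g : ℕ} (k : Fin g) : sgSec g (sgA k) = FreeGroup.of ((k, false) : Fin g × Bool) := by
  unfold sgSec
  have h1 : ∃ j, sgA k = sgA (g := g) j := ⟨k, rfl⟩
  rw [if_neg (sgA_ne_one k), dif_pos h1]
  congr 1
  rw [(sgA_inj h1.choose_spec.symm : h1.choose = k)]

lemma sgSec_B {g : ℕ} (k : Fin g) : sgSec g (sgB k) = FreeGroup.of ((k, true) : Fin g × Bool) := by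
  unfold sgSec
  have h1 : ¬ ∃ j, sgB k = sgA (g := g) j := fun ⟨j, hj⟩ => sgB_ne_sgA k j hj
  have h2 : ∃ j, sgB k = sgB (g := g) j := ⟨k, rfl⟩
  rw [if_neg (sgB_ne_one k), dif_neg h1, dif_pos h2]
  congr 1
  rw [(sgB_inj h2.choose_spec.symm : h2.choose = k)]

end SurfaceAux


lemma bound_exists (g : ℕ) (w : FreeGroup (Fin g × Bool))
    (hw : w ∈ Subgroup.normalClosure {surfaceRelator g}) :
    ∃ n : ℕ, ∀ (A : Type*) [NormedRing A] [StarRing A] [CStarRing A]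
      (u v : Fin g → unitary A),
      ‖((hatPi u v w : unitary A) : A) - 1‖
        ≤ n * ‖((hatPi u v (surfaceRelator g) : unitary A) : A) - 1‖ := by
  have hw' : w ∈ Subgroup.closure (Group.conjugatesOfSet {surfaceRelator g}) := hw
  clear hw
  induction hw' using Subgroup.closure_induction with
  | mem x hx =>
    obtain ⟨b, hb, hconj⟩ := Group.mem_conjugatesOfSet_iff.mp hx
    rw [Set.mem_singleton_iff] at hb; subst hb
    obtain ⟨c, hc⟩ := isConj_iff.mp hconj
    refine ⟨1, ?_⟩
    intro A _ _ _ u v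
    rw [← hc, map_mul, map_mul, map_inv, norm_conj_sub_one]
    simp
  | one =>
    refine ⟨0, ?_⟩
    intro A _ _ _ u v
    simp
  | mul x y hx hy ihx ihy =>
    obtain ⟨n1, h1⟩ := ihx; obtain ⟨n2, h2⟩ := ihy
    refine ⟨n1 + n2, ?_⟩
    intro A _ _ _ u v
    rw [map_mul]
    refine le_trans (norm_mul_sub_one _ _) ?_
    refine le_trans (add_le_add (h1 A u v) (h2 A u v)) ?_
    rw [← add_mul]
    push_cast
    exact le_rfl
  | inv x hx ihx =>
    obtain ⟨n, h⟩ := ihx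
    refine ⟨n, ?_⟩
    intro A _ _ _ u v
    rw [map_inv, norm_inv_sub_one]
    exact h A u v

lemma finset_bound (g : ℕ) (D : Finset (FreeGroup (Fin g × Bool)))
    (hD : ∀ d ∈ D, d ∈ Subgroup.normalClosure {surfaceRelator g}) :
    ∃ n : ℕ, ∀ d ∈ D, ∀ (A : Type*) [NormedRing A] [StarRing A] [CStarRing A]
      (u v : Fin g → unitary A),
      ‖((hatPi u v d : unitary A) : A) - 1‖
        ≤ n * ‖((hatPi u v (surfaceRelator g) : unitary A) : A) - 1‖ := by
  classical
  refine ⟨D.sup (fun d => if h : d ∈ Subgroup.normalClosure {surfaceRelator g} then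
    (bound_exists g d h).choose else 0), ?_⟩
  intro d hd A _ _ _ u v
  have hmem := hD d hd
  refine le_trans ((bound_exists g d hmem).choose_spec A u v) ?_
  have hle : (bound_exists g d hmem).choose ≤
      D.sup (fun d => if h : d ∈ Subgroup.normalClosure {surfaceRelator g} then
        (bound_exists g d h).choose else 0) := by
    have heq : (fun d => if h : d ∈ Subgroup.normalClosure {surfaceRelator g} then
        (bound_exists.{u_1} g d h).choose else 0) d = (bound_exists.{u_1} g d hmem).choose :=
        dif_pos hmem
    have h2 := Finset.le_sup (f := fun d => if h : d ∈ Subgroup.normalClosure {surfaceRelator g}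
      then (bound_exists g d h).choose else 0) hd
    rwa [dif_pos hmem] at h2
  exact mul_le_mul_of_nonneg_right (Nat.cast_le.mpr hle) (norm_nonneg _)

lemma hatPi_of_A {g : ℕ} {A : Type*} [NormedRing A] [StarRing A]
    (u v : Fin g → unitary A) (k : Fin g) :
    hatPi u v (FreeGroup.of ((k, false) : Fin g × Bool)) = u k := by
  simp [hatPi]

lemma hatPi_of_B {g : ℕ} {A : Type*} [NormedRing A] [StarRing A]
    (u v : Fin g → unitary A) (k : Fin g) :
    hatPi u v (FreeGroup.of ((k, true) : Fin g × Bool)) = v k := by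
  simp [hatPi]
/-- There is a section `s : Γ_g → F_{2g}` of `q` with `s(1) = 1`, `s(αₖ) = α̂ₖ`, `s(βₖ) = β̂ₖ`,
such that for every `ε > 0` and finite `F ⊆ Γ_g` there is `δ > 0`, independent of `A`, with:
for all unitaries `u₁, v₁, …, u_g, v_g` in a unital C*-algebra `A` with
`‖∏ₖ [uₖ, vₖ] - 1‖ < δ`, the map `π = π̂ ∘ s` is an `(F, ε)`-representation with
`π(αₖ) = uₖ` and `π(βₖ) = vₖ`. -/
theorem statement1 (g : ℕ) (hg : 1 ≤ g) :
    ∃ s : SurfaceGroup g → FreeGroup (Fin g × Bool),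
      (∀ x : SurfaceGroup g, sgProj g (s x) = x) ∧
      s 1 = 1 ∧
      (∀ k : Fin g, s (sgA k) = FreeGroup.of ((k, false) : Fin g × Bool)) ∧
      (∀ k : Fin g, s (sgB k) = FreeGroup.of ((k, true) : Fin g × Bool)) ∧
      (∀ ε : ℝ, 0 < ε → ∀ F : Finset (SurfaceGroup g),
        ∃ δ > (0 : ℝ),
          ∀ (A : Type*) [NormedRing A] [StarRing A] [CStarRing A] [NormedAlgebra ℂ A]
            [CompleteSpace A] [StarModule ℂ A],
            ∀ u v : Fin g → unitary A,
              ‖(((List.ofFn fun i : Fin g => ⁅u i, v i⁆).prod : unitary A) : A) - 1‖ < δ →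
              (IsQuasiRep (↑F) ε (fun x => hatPi u v (s x)) ∧
               (∀ k : Fin g, hatPi u v (s (sgA k)) = u k) ∧
               (∀ k : Fin g, hatPi u v (s (sgB k)) = v k))) := by
  classical
  refine ⟨sgSec g, sgProj_sgSec g, sgSec_one g, fun k => sgSec_A k, fun k => sgSec_B k, ?_⟩
  intro ε hε F
  set D : Finset (FreeGroup (Fin g × Bool)) :=
    (F.image fun x => sgSec g x⁻¹ * sgSec g x) ∪
    ((F ×ˢ F).image fun p => sgSec g p.1 * sgSec g p.2 * (sgSec g (p.1 * p.2))⁻¹) with hDdef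
  have hker : ∀ d ∈ D, d ∈ Subgroup.normalClosure {surfaceRelator g} := by
    intro d hd
    have hone : sgProj g d = 1 := by
      rw [hDdef] at hd
      simp only [Finset.mem_union, Finset.mem_image, Finset.mem_product] at hd
      rcases hd with ⟨x, _, rfl⟩ | ⟨⟨x, y⟩, _, rfl⟩
      · rw [map_mul, sgProj_sgSec, sgProj_sgSec, inv_mul_cancel]
      · rw [map_mul, map_mul, map_inv, sgProj_sgSec, sgProj_sgSec, sgProj_sgSec, mul_inv_cancel]
    exact (QuotientGroup.eq_one_iff d).mp hone
  obtain ⟨N, hN⟩ := finset_bound g D hker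
  refine ⟨ε / (N + 1), by positivity, ?_⟩
  intro A _ _ _ _ _ _ u v hδ
  have hrel : hatPi u v (surfaceRelator g) = (List.ofFn fun i : Fin g => ⁅u i, v i⁆).prod := by
    rw [surfaceRelator, map_list_prod, List.map_ofFn]
    congr 1
    exact congrArg List.ofFn (funext fun i => by
      simp only [Function.comp_apply, map_commutatorElement]
      rw [hatPi_of_A, hatPi_of_B])
  have htδ : ‖((hatPi u v (surfaceRelator g) : unitary A) : A) - 1‖ < ε / (N + 1) := by
    rw [hrel]; exact hδ
  have hbound : ∀ d ∈ D, ‖((hatPi u v d : unitary A) : A) - 1‖ < ε := by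
    intro d hd
    refine lt_of_le_of_lt (hN d hd A u v) ?_
    have h1 : (N : ℝ) * ‖((hatPi u v (surfaceRelator g) : unitary A) : A) - 1‖
        ≤ (N : ℝ) * (ε / (N + 1)) :=
      mul_le_mul_of_nonneg_left htδ.le (Nat.cast_nonneg _)
    refine lt_of_le_of_lt h1 ?_
    have h2 : (0 : ℝ) < ε / (N + 1) := by positivity
    have h3 : (N : ℝ) < (N : ℝ) + 1 := by linarith
    calc (N : ℝ) * (ε / (N + 1)) < ((N : ℝ) + 1) * (ε / (N + 1)) :=
          mul_lt_mul_of_pos_right h3 h2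
      _ = ε := by field_simp
  have hstar : ∀ x : SurfaceGroup g, star ((hatPi u v (sgSec g x) : unitary A) : A)
      = (((hatPi u v (sgSec g x))⁻¹ : unitary A) : A) := by
    intro x
    rw [← Unitary.coe_star, Unitary.star_eq_inv]
  refine ⟨⟨?_, ?_, ?_⟩, ?_, ?_⟩
  · show hatPi u v (sgSec g 1) = 1
    rw [sgSec_one, map_one]
  · intro x hx
    have hd : sgSec g x⁻¹ * sgSec g x ∈ D := by
      rw [hDdef]
      exact Finset.mem_union_left _ (Finset.mem_image.mpr ⟨x, hx, rfl⟩)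
    have hb := hbound _ hd
    rw [map_mul] at hb
    rw [hstar, ← norm_mul_inv_sub_one, inv_inv]
    exact hb
  · intro x hx y hy
    have hd : sgSec g x * sgSec g y * (sgSec g (x * y))⁻¹ ∈ D := by
      rw [hDdef]
      exact Finset.mem_union_right _ (Finset.mem_image.mpr
        ⟨(x, y), Finset.mem_product.mpr ⟨hx, hy⟩, rfl⟩)
    have hb := hbound _ hd
    rw [map_mul, map_inv, map_mul] at hb
    rw [norm_sub_rev, ← MulMemClass.coe_mul, ← norm_mul_inv_sub_one]
    exact hb
  · intro k
    rw [sgSec_A, hatPi_of_A]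
  · intro k
    rw [sgSec_B, hatPi_of_B]
end

section
/- Let A be a unital complex Banach algebra and τ a trace on A. Let ξ₁, ξ₂ : [t₁, t₂] → A be continuously differentiable paths all of whose values are invertible, and let ξ(t) = ξ₁(t)ξ₂(t) be their pointwise product. Then Δ̃_τ(ξ) = Δ̃_τ(ξ₁) + Δ̃_τ(ξ₂), i.e. ∫_{t₁}^{t₂} τ(ξ′(t)ξ(t)⁻¹) dt = ∫_{t₁}^{t₂} τ(ξ₁′(t)ξ₁(t)⁻¹) dt + ∫_{t₁}^{t₂} τ(ξ₂′(t)ξ₂(t)⁻¹) dt. -/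
open scoped Real

noncomputable def dhsDet {A : Type*} [NormedRing A] [NormedAlgebra ℂ A] [CompleteSpace A]
    (τ : A →L[ℂ] ℂ) (t₁ t₂ : ℝ) (ξ ξ' : ℝ → A) : ℂ :=
  (2 * (Real.pi : ℂ) * Complex.I)⁻¹ * ∫ t in t₁..t₂, τ (ξ' t * Ring.inverse (ξ t))

/-- If `ξ = ξ₁ ξ₂` is the pointwise product of two continuously differentiable
invertible-valued paths, then `Δ̃_τ(ξ) = Δ̃_τ(ξ₁) + Δ̃_τ(ξ₂)`, i.e.
`∫ τ(ξ′ ξ⁻¹) = ∫ τ(ξ₁′ ξ₁⁻¹) + ∫ τ(ξ₂′ ξ₂⁻¹)`. -/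
theorem statement2 {A : Type*} [NormedRing A] [NormedAlgebra ℂ A] [CompleteSpace A]
    (τ : A →L[ℂ] ℂ) (hτ : ∀ a b : A, τ (a * b) = τ (b * a))
    (t₁ t₂ : ℝ) (ht : t₁ ≤ t₂)
    (ξ₁ ξ₂ ξ ξ₁' ξ₂' ξ' : ℝ → A)
    (hmul : ∀ t ∈ Set.Icc t₁ t₂, ξ t = ξ₁ t * ξ₂ t)
    (hd₁ : ∀ t ∈ Set.Icc t₁ t₂, HasDerivWithinAt ξ₁ (ξ₁' t) (Set.Icc t₁ t₂) t)
    (hd₂ : ∀ t ∈ Set.Icc t₁ t₂, HasDerivWithinAt ξ₂ (ξ₂' t) (Set.Icc t₁ t₂) t)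
    (hd : ∀ t ∈ Set.Icc t₁ t₂, HasDerivWithinAt ξ (ξ' t) (Set.Icc t₁ t₂) t)
    (hc₁ : ContinuousOn ξ₁' (Set.Icc t₁ t₂))
    (hc₂ : ContinuousOn ξ₂' (Set.Icc t₁ t₂))
    (hc : ContinuousOn ξ' (Set.Icc t₁ t₂))
    (hinv₁ : ∀ t ∈ Set.Icc t₁ t₂, IsUnit (ξ₁ t))
    (hinv₂ : ∀ t ∈ Set.Icc t₁ t₂, IsUnit (ξ₂ t)) :
    dhsDet τ t₁ t₂ ξ ξ' = dhsDet τ t₁ t₂ ξ₁ ξ₁' + dhsDet τ t₁ t₂ ξ₂ ξ₂' ∧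
    (∫ t in t₁..t₂, τ (ξ' t * Ring.inverse (ξ t))) =
      (∫ t in t₁..t₂, τ (ξ₁' t * Ring.inverse (ξ₁ t))) +
      (∫ t in t₁..t₂, τ (ξ₂' t * Ring.inverse (ξ₂ t))) := by
  have main : (∫ t in t₁..t₂, τ (ξ' t * Ring.inverse (ξ t))) =
      (∫ t in t₁..t₂, τ (ξ₁' t * Ring.inverse (ξ₁ t))) +
      (∫ t in t₁..t₂, τ (ξ₂' t * Ring.inverse (ξ₂ t))) := by
    rcases eq_or_lt_of_le ht with rfl | hlt
    · simp
    -- uniqueness of the derivative on Icc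
    have huni : UniqueDiffOn ℝ (Set.Icc t₁ t₂) := uniqueDiffOn_Icc hlt
    have hder : ∀ t ∈ Set.Icc t₁ t₂, ξ' t = ξ₁' t * ξ₂ t + ξ₁ t * ξ₂' t := by
      intro t htm
      have h1 : HasDerivWithinAt ξ (ξ₁' t * ξ₂ t + ξ₁ t * ξ₂' t) (Set.Icc t₁ t₂) t :=
        (((hd₁ t htm).mul (hd₂ t htm)).congr hmul (hmul t htm))
      exact (huni t htm).eq_deriv _ (hd t htm) h1
    have key : ∀ t ∈ Set.Icc t₁ t₂,
        τ (ξ' t * Ring.inverse (ξ t)) =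
        τ (ξ₁' t * Ring.inverse (ξ₁ t)) + τ (ξ₂' t * Ring.inverse (ξ₂ t)) := by
      intro t htm
      have u₁ := hinv₁ t htm
      have u₂ := hinv₂ t htm
      have hinvm : Ring.inverse (ξ₁ t * ξ₂ t)
          = Ring.inverse (ξ₂ t) * Ring.inverse (ξ₁ t) := by
        rw [← u₁.unit_spec, ← u₂.unit_spec, ← Units.val_mul, Ring.inverse_unit,
          Ring.inverse_unit, Ring.inverse_unit, mul_inv_rev, Units.val_mul]
      rw [hmul t htm, hder t htm, hinvm, add_mul, map_add]
      congr 1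
      · rw [mul_assoc, ← mul_assoc (ξ₂ t), Ring.mul_inverse_cancel _ u₂, one_mul]
      · rw [mul_assoc, hτ, mul_assoc, mul_assoc, Ring.inverse_mul_cancel _ u₁, mul_one]
    -- continuity of pieces
    have hcont₁ : ContinuousOn ξ₁ (Set.Icc t₁ t₂) := fun t htm =>
      (hd₁ t htm).continuousWithinAt
    have hcont₂ : ContinuousOn ξ₂ (Set.Icc t₁ t₂) := fun t htm =>
      (hd₂ t htm).continuousWithinAt
    have hinvcont : ∀ (g : ℝ → A), ContinuousOn g (Set.Icc t₁ t₂) →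
        (∀ t ∈ Set.Icc t₁ t₂, IsUnit (g t)) →
        ContinuousOn (fun t => Ring.inverse (g t)) (Set.Icc t₁ t₂) := by
      intro g hg hu t htm
      have : ContinuousAt Ring.inverse (g t) := by
        have := NormedRing.inverse_continuousAt (hu t htm).unit
        rwa [(hu t htm).unit_spec] at this
      exact this.comp_continuousWithinAt (hg t htm)
    have hf₁ : ContinuousOn (fun t => τ (ξ₁' t * Ring.inverse (ξ₁ t))) (Set.Icc t₁ t₂) :=
      τ.continuous.comp_continuousOn (hc₁.mul (hinvcont ξ₁ hcont₁ hinv₁))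
    have hf₂ : ContinuousOn (fun t => τ (ξ₂' t * Ring.inverse (ξ₂ t))) (Set.Icc t₁ t₂) :=
      τ.continuous.comp_continuousOn (hc₂.mul (hinvcont ξ₂ hcont₂ hinv₂))
    have huIcc : Set.uIcc t₁ t₂ = Set.Icc t₁ t₂ := Set.uIcc_of_le ht
    have hi₁ : IntervalIntegrable (fun t => τ (ξ₁' t * Ring.inverse (ξ₁ t)))
        MeasureTheory.volume t₁ t₂ := (huIcc ▸ hf₁ : _).intervalIntegrable
    have hi₂ : IntervalIntegrable (fun t => τ (ξ₂' t * Ring.inverse (ξ₂ t)))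
        MeasureTheory.volume t₁ t₂ := (huIcc ▸ hf₂ : _).intervalIntegrable
    calc (∫ t in t₁..t₂, τ (ξ' t * Ring.inverse (ξ t)))
        = ∫ t in t₁..t₂,
            (τ (ξ₁' t * Ring.inverse (ξ₁ t)) + τ (ξ₂' t * Ring.inverse (ξ₂ t))) := by
          refine intervalIntegral.integral_congr fun t htm => ?_
          exact key t (huIcc ▸ htm)
      _ = _ := intervalIntegral.integral_add hi₁ hi₂
  refine ⟨?_, main⟩
  simp only [dhsDet, main, mul_add]
end

section
/- Let A be a unital complex Banach algebra, τ a trace on A, and ξ : [t₁, t₂] → A a continuously differentiable path with ‖ξ(t) − 1‖ < 1 for all t ∈ [t₁, t₂] (so that each ξ(t) is invertible). Then 2πi · Δ̃_τ(ξ) = τ(log ξ(t₂)) − τ(log ξ(t₁)). -/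
/-- For `‖x - 1‖ < 1`, the logarithm `log x = Σ_{n=1}^∞ (-1)^{n+1} (x-1)ⁿ / n`,
written here with the summation index shifted by one. -/
noncomputable def balog {A : Type*} [NormedRing A] [NormedAlgebra ℂ A] [CompleteSpace A]
    (x : A) : A :=
  ∑' n : ℕ, (((-1 : ℂ) ^ n) * ((n : ℂ) + 1)⁻¹) • (x - 1) ^ (n + 1)

section Aux

variable {A : Type*} [NormedRing A] [NormedAlgebra ℂ A] [CompleteSpace A]

/-- Fréchet derivative of `y ↦ y ^ k` at `x`, defined recursively. -/
noncomputable def powDeriv : ℕ → A → (A →L[ℂ] A)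
  | 0, _ => 0
  | (k + 1), x => x • powDeriv k x + (ContinuousLinearMap.id ℂ A).smulRight (x ^ k)

lemma hasFDerivAt_pow'' (k : ℕ) (x : A) :
    HasFDerivAt (fun y : A => y ^ k) (powDeriv k x) x := by
  induction k with
  | zero => simpa [powDeriv] using hasFDerivAt_const (1 : A) x
  | succ k ih =>
    have h := (hasFDerivAt_id x).mul' ih
    have e : (fun y : A => y ^ (k + 1)) = fun y : A => y * y ^ k := by
      funext y; rw [pow_succ']
    rw [e]
    exact h

lemma powDeriv_apply (k : ℕ) (x h : A) :
    powDeriv k x h = ∑ i ∈ Finset.range k, x ^ i * h * x ^ (k - 1 - i) := by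
  induction k with
  | zero => simp [powDeriv]
  | succ k ih =>
    rw [Finset.sum_range_succ']
    have hterm : ∀ i ∈ Finset.range k,
        x ^ (i + 1) * h * x ^ (k + 1 - 1 - (i + 1)) = x * (x ^ i * h * x ^ (k - 1 - i)) := by
      intro i hi
      rw [Finset.mem_range] at hi
      have : k + 1 - 1 - (i + 1) = k - 1 - i := by omega
      rw [this, pow_succ']
      ring_nf
      rw [mul_assoc, mul_assoc, mul_assoc]
    rw [Finset.sum_congr rfl hterm, ← Finset.mul_sum, ← ih]
    simp [powDeriv, smul_eq_mul]

lemma trace_powDeriv (τ : A →L[ℂ] ℂ) (hτ : ∀ a b : A, τ (a * b) = τ (b * a))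
    (k : ℕ) (x h : A) :
    τ (powDeriv (k + 1) x h) = ((k : ℂ) + 1) * τ (h * x ^ k) := by
  rw [powDeriv_apply, map_sum]
  have hterm : ∀ i ∈ Finset.range (k + 1),
      τ (x ^ i * h * x ^ (k + 1 - 1 - i)) = τ (h * x ^ k) := by
    intro i hi
    rw [Finset.mem_range] at hi
    have he : k + 1 - 1 - i + i = k := by omega
    rw [mul_assoc, hτ, mul_assoc, ← pow_add, he]
  rw [Finset.sum_congr rfl hterm, Finset.sum_const, Finset.card_range, nsmul_eq_mul]
  push_cast
  ring

end Aux

/-- If `ξ` is a continuously differentiable path with `‖ξ(t) - 1‖ < 1` for all `t`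
(so each `ξ(t)` is invertible), then `2πi · Δ̃_τ(ξ) = τ(log ξ(t₂)) - τ(log ξ(t₁))`. -/
theorem statement3 {A : Type*} [NormedRing A] [NormedAlgebra ℂ A] [CompleteSpace A]
    (τ : A →L[ℂ] ℂ) (hτ : ∀ a b : A, τ (a * b) = τ (b * a))
    (t₁ t₂ : ℝ) (ht : t₁ ≤ t₂) (ξ ξ' : ℝ → A)
    (hd : ∀ t ∈ Set.Icc t₁ t₂, HasDerivWithinAt ξ (ξ' t) (Set.Icc t₁ t₂) t)
    (hc : ContinuousOn ξ' (Set.Icc t₁ t₂))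
    (hnorm : ∀ t ∈ Set.Icc t₁ t₂, ‖ξ t - 1‖ < 1) :
    2 * (Real.pi : ℂ) * Complex.I * dhsDet τ t₁ t₂ ξ ξ' =
      τ (balog (ξ t₂)) - τ (balog (ξ t₁)) := by
  classical
  -- continuity of ξ
  have hξc : ContinuousOn ξ (Set.Icc t₁ t₂) := fun t htm => (hd t htm).continuousWithinAt
  -- max of ‖ξ t - 1‖
  obtain ⟨t₀, ht₀, hmax'⟩ := (isCompact_Icc (a := t₁) (b := t₂)).exists_isMaxOn
    (Set.nonempty_Icc.mpr ht) ((hξc.sub continuousOn_const).norm)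
  have hmax : ∀ t ∈ Set.Icc t₁ t₂, ‖ξ t - 1‖ ≤ ‖ξ t₀ - 1‖ := fun t htm => hmax' htm
  set r : ℝ := ‖ξ t₀ - 1‖ with hr_def
  have hr1 : r < 1 := hnorm t₀ ht₀
  have hr0 : 0 ≤ r := norm_nonneg _
  set r' : ℝ := (r + 1) / 2 with hr'_def
  have hrr' : r < r' := by rw [hr'_def]; linarith
  have hr'1 : r' < 1 := by rw [hr'_def]; linarith
  have hr'0 : 0 < r' := by rw [hr'_def]; linarith
  set s : Set A := Metric.ball (1 : A) r' with hs_def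
  have hmem : ∀ t ∈ Set.Icc t₁ t₂, ξ t ∈ s := by
    intro t htm
    rw [hs_def, Metric.mem_ball, dist_eq_norm]
    exact lt_of_le_of_lt (hmax t htm) hrr'
  have hball_norm : ∀ x ∈ s, ‖x - 1‖ < r' := by
    intro x hx
    rwa [hs_def, Metric.mem_ball, dist_eq_norm] at hx
  -- the series of functions
  set c : ℕ → ℂ := fun n => ((-1 : ℂ) ^ n) * ((n : ℂ) + 1)⁻¹ with hc_def
  have hc_norm : ∀ n, ‖c n‖ ≤ 1 := by
    intro n
    rw [hc_def]
    have h2 : ((n : ℂ) + 1) = ((n + 1 : ℕ) : ℂ) := by push_cast; ring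
    simp only [norm_mul, norm_pow, norm_neg, norm_one, one_pow, one_mul, norm_inv, h2,
      Complex.norm_natCast]
    apply inv_le_one_of_one_le₀
    exact_mod_cast Nat.succ_le_succ (Nat.zero_le n)
  set f : ℕ → A → ℂ := fun n x => τ (c n • (x - 1) ^ (n + 1)) with hf_def
  set f' : ℕ → A → (A →L[ℂ] ℂ) := fun n x =>
    ((-1 : ℂ) ^ n) • (τ.comp ((ContinuousLinearMap.mul ℂ A).flip ((x - 1) ^ n))) with hf'_def
  have hn1 : ∀ n : ℕ, ((n : ℂ) + 1) ≠ 0 := by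
    intro n
    have h2 : ((n : ℂ) + 1) = ((n + 1 : ℕ) : ℂ) := by push_cast; ring
    rw [h2]
    exact_mod_cast Nat.succ_ne_zero n
  -- each f n has derivative f' n x
  have hf : ∀ (n : ℕ) (x : A), HasFDerivAt (f n) (f' n x) x := by
    intro n x
    have h1 : HasFDerivAt (fun y : A => (y - 1) ^ (n + 1)) (powDeriv (n + 1) (x - 1)) x := by
      have hsub : HasFDerivAt (fun y : A => y - 1) (ContinuousLinearMap.id ℂ A) x :=
        (hasFDerivAt_id x).sub_const 1
      have := (hasFDerivAt_pow'' (n + 1) (x - 1)).comp x hsub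
      exact this
    have h2 : HasFDerivAt (f n) (τ.comp (c n • powDeriv (n + 1) (x - 1))) x :=
      τ.hasFDerivAt.comp x (h1.const_smul (c n))
    convert h2 using 1
    ext h
    simp only [hf'_def, ContinuousLinearMap.smul_apply, ContinuousLinearMap.coe_comp',
      Function.comp_apply, ContinuousLinearMap.coe_smul', Pi.smul_apply,
      ContinuousLinearMap.flip_apply, ContinuousLinearMap.mul_apply']
    rw [map_smul, trace_powDeriv τ hτ n (x - 1) h]
    rw [smul_eq_mul, smul_eq_mul, hc_def]
    have h1n : (1 + (n : ℂ)) ≠ 0 := by rw [add_comm]; exact hn1 n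
    have key : (n : ℂ) * (1 + (n : ℂ))⁻¹ + (1 + (n : ℂ))⁻¹ = 1 := by
      field_simp
      ring
    linear_combination (-(τ (h * (x - 1) ^ n)) * (-1 : ℂ) ^ n) * key
  -- bound
  -- bound for powers
  set C : ℝ := ‖(1 : A)‖ + 1 with hC_def
  have hC1 : 1 ≤ C := by rw [hC_def]; have := norm_nonneg (1 : A); linarith
  have hpow_bound : ∀ (y : A), ‖y‖ ≤ r' → ∀ n : ℕ, ‖y ^ n‖ ≤ C * r' ^ n := by
    intro y hy n
    cases n with
    | zero =>
      simp only [pow_zero, mul_one]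
      rw [hC_def]
      linarith [norm_nonneg (1 : A)]
    | succ m =>
      calc ‖y ^ (m + 1)‖ ≤ ‖y‖ ^ (m + 1) := norm_pow_le' _ (Nat.succ_pos m)
        _ ≤ r' ^ (m + 1) := pow_le_pow_left₀ (norm_nonneg _) hy _
        _ ≤ C * r' ^ (m + 1) := by nlinarith [pow_nonneg hr'0.le (m + 1)]
  set u : ℕ → ℝ := fun n => ‖τ‖ * C * r' ^ n with hu_def
  have hu : Summable u := (summable_geometric_of_lt_one hr'0.le hr'1).mul_left (‖τ‖ * C)
  have hf' : ∀ (n : ℕ) (x : A), x ∈ s → ‖f' n x‖ ≤ u n := by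
    intro n x hx
    rw [hf'_def]
    apply ContinuousLinearMap.opNorm_le_bound
    · rw [hu_def]; positivity
    intro h
    simp only [ContinuousLinearMap.smul_apply, ContinuousLinearMap.coe_comp',
      Function.comp_apply, ContinuousLinearMap.flip_apply,
      ContinuousLinearMap.mul_apply', norm_smul, norm_pow,
      norm_neg, norm_one, one_pow, one_mul]
    calc ‖τ (h * (x - 1) ^ n)‖ ≤ ‖τ‖ * ‖h * (x - 1) ^ n‖ := τ.le_opNorm _
      _ ≤ ‖τ‖ * (‖h‖ * ‖(x - 1) ^ n‖) := by
          gcongr; exact norm_mul_le _ _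
      _ ≤ ‖τ‖ * (‖h‖ * (C * r' ^ n)) := by
          gcongr
          exact hpow_bound _ (hball_norm x hx).le n
      _ = u n * ‖h‖ := by rw [hu_def]; ring
  -- the series is differentiable with derivative the sum of derivatives
  have h1s : (1 : A) ∈ s := by
    rw [hs_def, Metric.mem_ball, dist_self]
    exact hr'0
  have hf0 : Summable fun n => f n (1 : A) := by
    have he : (fun n => f n (1 : A)) = fun _ => (0 : ℂ) := by
      funext n
      simp [hf_def]
    rw [he]
    exact summable_zero
  have hpre : IsPreconnected s := by
    rw [hs_def]
    exact (convex_ball (1 : A) r').isPreconnected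
  have hopen : IsOpen s := by rw [hs_def]; exact Metric.isOpen_ball
  have key : ∀ x ∈ s, HasFDerivAt (fun y => ∑' n, f n y) (∑' n, f' n x) x := by
    intro x hx
    exact hasFDerivAt_tsum_of_isPreconnected (𝕜 := ℂ) (E := A) (F := ℂ) (f := f) (f' := f')
      hu hopen hpre (fun n y _ => hf n y) hf' h1s hf0 hx
  -- evaluation of the derivative
  have deriv_eval : ∀ x : A, x ∈ s → ∀ h : A,
      (∑' n, f' n x) h = τ (h * Ring.inverse x) := by
    intro x hx h
    have hx1 : ‖x - 1‖ < 1 := (hball_norm x hx).trans hr'1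
    have hx1' : ‖(1 : A) - x‖ < 1 := by rwa [norm_sub_rev]
    have hsum : Summable fun n => f' n x :=
      Summable.of_norm_bounded hu (fun n => hf' n x hx)
    have e1 := (ContinuousLinearMap.apply ℂ ℂ h).map_tsum hsum
    simp only [ContinuousLinearMap.apply_apply] at e1
    have e2 : ∀ n : ℕ, (f' n x) h = τ (h * ((1 : A) - x) ^ n) := by
      intro n
      have hpow : ((1 : A) - x) ^ n = ((-1 : ℂ) ^ n) • (x - 1) ^ n := by
        rw [show (1 : A) - x = ((-1 : ℂ)) • (x - 1) by rw [neg_smul, one_smul, neg_sub],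
          smul_pow]
      rw [hpow, mul_smul_comm, map_smul]
      simp [hf'_def]
    have hgeom : Summable fun n : ℕ => ((1 : A) - x) ^ n :=
      summable_geometric_of_norm_lt_one hx1'
    have e3 := (τ.comp (ContinuousLinearMap.mul ℂ A h)).map_tsum hgeom
    simp only [ContinuousLinearMap.coe_comp', Function.comp_apply,
      ContinuousLinearMap.mul_apply'] at e3
    rw [e1, tsum_congr e2, ← e3, geom_series_eq_inverse _ hx1', sub_sub_cancel]
  -- derivative of F along the path
  set F : ℝ → ℂ := fun t => ∑' n, f n (ξ t) with hF_def
  have hFd : ∀ t ∈ Set.Icc t₁ t₂,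
      HasDerivWithinAt F (τ (ξ' t * Ring.inverse (ξ t))) (Set.Icc t₁ t₂) t := by
    intro t htm
    have h1 := ((key (ξ t) (hmem t htm)).restrictScalars ℝ).comp_hasDerivWithinAt t (hd t htm)
    have h2 : ((∑' n, f' n (ξ t)).restrictScalars ℝ) (ξ' t) = τ (ξ' t * Ring.inverse (ξ t)) :=
      deriv_eval (ξ t) (hmem t htm) (ξ' t)
    rw [h2] at h1
    exact h1
  have hFc : ContinuousOn F (Set.Icc t₁ t₂) := fun t htm => (hFd t htm).continuousWithinAt
  -- integrability of the integrand
  have hunit : ∀ t ∈ Set.Icc t₁ t₂, IsUnit (ξ t) := by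
    intro t htm
    have h1 : ‖(1 : A) - ξ t‖ < 1 := by rw [norm_sub_rev]; exact hnorm t htm
    have h2 := isUnit_one_sub_of_norm_lt_one h1
    rwa [sub_sub_cancel] at h2
  have hinvc : ContinuousOn (fun t => Ring.inverse (ξ t)) (Set.Icc t₁ t₂) := by
    intro t htm
    obtain ⟨u', hu'⟩ := hunit t htm
    have h2 : ContinuousAt Ring.inverse (ξ t) := hu' ▸ NormedRing.inverse_continuousAt u'
    exact h2.comp_continuousWithinAt (hξc t htm)
  have hint : IntervalIntegrable (fun t => τ (ξ' t * Ring.inverse (ξ t)))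
      MeasureTheory.volume t₁ t₂ := by
    apply ContinuousOn.intervalIntegrable
    rw [Set.uIcc_of_le ht]
    exact τ.continuous.comp_continuousOn (hc.mul hinvc)
  -- fundamental theorem of calculus
  have ftc := intervalIntegral.integral_eq_sub_of_hasDeriv_right_of_le ht hFc
    (fun x hx => ((hFd x (Set.mem_Icc_of_Ioo hx)).hasDerivAt
      (Icc_mem_nhds hx.1 hx.2)).hasDerivWithinAt) hint
  -- identification of F with τ ∘ balog ∘ ξ
  have hbal : ∀ t ∈ Set.Icc t₁ t₂, F t = τ (balog (ξ t)) := by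
    intro t htm
    have hx1 : ‖ξ t - 1‖ < 1 := hnorm t htm
    have hsumA : Summable fun n : ℕ => c n • (ξ t - 1) ^ (n + 1) := by
      apply Summable.of_norm_bounded (g := fun n => ‖ξ t - 1‖ * ‖ξ t - 1‖ ^ n)
        ((summable_geometric_of_lt_one (norm_nonneg _) hx1).mul_left _)
      intro n
      rw [norm_smul]
      calc ‖c n‖ * ‖(ξ t - 1) ^ (n + 1)‖
          ≤ 1 * ‖(ξ t - 1) ^ (n + 1)‖ := by
            apply mul_le_mul_of_nonneg_right (hc_norm n) (norm_nonneg _)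
        _ = ‖(ξ t - 1) ^ (n + 1)‖ := one_mul _
        _ ≤ ‖ξ t - 1‖ ^ (n + 1) := norm_pow_le' _ (Nat.succ_pos n)
        _ = ‖ξ t - 1‖ * ‖ξ t - 1‖ ^ n := by rw [pow_succ']
    calc F t = ∑' n, τ (c n • (ξ t - 1) ^ (n + 1)) := rfl
      _ = τ (∑' n, c n • (ξ t - 1) ^ (n + 1)) := (τ.map_tsum hsumA).symm
      _ = τ (balog (ξ t)) := by rw [balog, hc_def]
  -- conclusion
  have h2pi : (2 * (Real.pi : ℂ) * Complex.I) ≠ 0 := Complex.two_pi_I_ne_zero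
  rw [dhsDet, ← mul_assoc, mul_inv_cancel₀ h2pi, one_mul, ftc,
    hbal t₂ (Set.right_mem_Icc.mpr ht), hbal t₁ (Set.left_mem_Icc.mpr ht)]
end

section
/- Let A be a unital complex Banach algebra and τ a trace on A. Let H : [0,1] × [t₁, t₂] → A be a twice continuously differentiable map with H(s,t) invertible for all (s,t), and suppose the endpoints are fixed: H(s, t₁) = H(0, t₁) and H(s, t₂) = H(0, t₂) for all s ∈ [0,1]. Then Δ̃_τ(H(0, ·)) = Δ̃_τ(H(1, ·)); that is, the de la Harpe–Skandalis determinant of a path of invertibles is invariant under fixed-endpoint smooth homotopies. -/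
open Set MeasureTheory intervalIntegral Filter Topology

section aux

variable {E : Type*} [NormedAddCommGroup E] [NormedSpace ℝ E]

/-- Partial derivative in the first coordinate, as a genuine derivative, at a point whose
first coordinate is interior. -/
lemma slice_fst {G : ℝ × ℝ → E} {G' : (ℝ × ℝ) →L[ℝ] E} {a b c d s t : ℝ}
    (hG : HasFDerivWithinAt G G' (Set.Icc a b ×ˢ Set.Icc c d) (s, t))
    (hs : s ∈ Set.Ioo a b) (ht : t ∈ Set.Icc c d) :
    HasDerivAt (fun s' => G (s', t)) (G' (1, 0)) s := by
  have hline : HasDerivWithinAt (fun s' : ℝ => (s', t)) ((1 : ℝ), (0 : ℝ)) (Set.Icc a b) s :=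
    (HasDerivAt.prodMk (hasDerivAt_id s) (hasDerivAt_const s t)).hasDerivWithinAt
  have hmaps : Set.MapsTo (fun s' : ℝ => (s', t)) (Set.Icc a b) (Set.Icc a b ×ˢ Set.Icc c d) :=
    fun s' hs' => ⟨hs', ht⟩
  exact (hG.comp_hasDerivWithinAt s hline hmaps).hasDerivAt (Icc_mem_nhds hs.1 hs.2)

/-- Partial derivative in the second coordinate, as a genuine derivative, at a point whose
second coordinate is interior. -/
lemma slice_snd {G : ℝ × ℝ → E} {G' : (ℝ × ℝ) →L[ℝ] E} {a b c d s t : ℝ}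
    (hG : HasFDerivWithinAt G G' (Set.Icc a b ×ˢ Set.Icc c d) (s, t))
    (hs : s ∈ Set.Icc a b) (ht : t ∈ Set.Ioo c d) :
    HasDerivAt (fun t' => G (s, t')) (G' (0, 1)) t := by
  have hline : HasDerivWithinAt (fun t' : ℝ => (s, t')) ((0 : ℝ), (1 : ℝ)) (Set.Icc c d) t :=
    (HasDerivAt.prodMk (hasDerivAt_const t s) (hasDerivAt_id t)).hasDerivWithinAt
  have hmaps : Set.MapsTo (fun t' : ℝ => (s, t')) (Set.Icc c d) (Set.Icc a b ×ˢ Set.Icc c d) :=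
    fun t' ht' => ⟨hs, ht'⟩
  exact (hG.comp_hasDerivWithinAt t hline hmaps).hasDerivAt (Icc_mem_nhds ht.1 ht.2)

/-- Partial derivative in the second coordinate, as a derivative within the slice interval. -/
lemma slice_snd_within {G : ℝ × ℝ → E} {G' : (ℝ × ℝ) →L[ℝ] E} {a b c d s t : ℝ}
    (hG : HasFDerivWithinAt G G' (Set.Icc a b ×ˢ Set.Icc c d) (s, t))
    (hs : s ∈ Set.Icc a b) (ht : t ∈ Set.Icc c d) :
    HasDerivWithinAt (fun t' => G (s, t')) (G' (0, 1)) (Set.Icc c d) t := by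
  have hline : HasDerivWithinAt (fun t' : ℝ => (s, t')) ((0 : ℝ), (1 : ℝ)) (Set.Icc c d) t :=
    (HasDerivAt.prodMk (hasDerivAt_const t s) (hasDerivAt_id t)).hasDerivWithinAt
  exact hG.comp_hasDerivWithinAt t hline (fun t' ht' => ⟨hs, ht'⟩)

end aux

/-- The de la Harpe–Skandalis determinant is invariant under fixed-endpoint (twice
continuously differentiable) homotopies through invertible elements:
`Δ̃_τ(H(0, ·)) = Δ̃_τ(H(1, ·))`. -/
theorem statement4 {A : Type*} [NormedRing A] [NormedAlgebra ℂ A] [CompleteSpace A]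
    (τ : A →L[ℂ] ℂ) (hτ : ∀ a b : A, τ (a * b) = τ (b * a))
    (t₁ t₂ : ℝ) (ht : t₁ ≤ t₂) (H : ℝ × ℝ → A)
    (hsmooth : ContDiffOn ℝ 2 H (Set.Icc (0 : ℝ) 1 ×ˢ Set.Icc t₁ t₂))
    (hinv : ∀ p ∈ Set.Icc (0 : ℝ) 1 ×ˢ Set.Icc t₁ t₂, IsUnit (H p))
    (hend₁ : ∀ s ∈ Set.Icc (0 : ℝ) 1, H (s, t₁) = H (0, t₁))
    (hend₂ : ∀ s ∈ Set.Icc (0 : ℝ) 1, H (s, t₂) = H (0, t₂)) :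
    dhsDet τ t₁ t₂ (fun t => H (0, t))
        (fun t => derivWithin (fun t' => H (0, t')) (Set.Icc t₁ t₂) t) =
      dhsDet τ t₁ t₂ (fun t => H (1, t))
        (fun t => derivWithin (fun t' => H (1, t')) (Set.Icc t₁ t₂) t) := by
  rcases ht.eq_or_lt with rfl | hlt
  · simp [dhsDet]
  set R : Set (ℝ × ℝ) := Set.Icc (0 : ℝ) 1 ×ˢ Set.Icc t₁ t₂ with hRdef
  have hRuniq : UniqueDiffOn ℝ R := (uniqueDiffOn_Icc zero_lt_one).prod (uniqueDiffOn_Icc hlt)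
  set F : ℝ × ℝ → (ℝ × ℝ) →L[ℝ] A := fderivWithin ℝ H R with hFdef
  have hHdiff : DifferentiableOn ℝ H R := hsmooth.differentiableOn two_ne_zero
  have hF : ∀ p ∈ R, HasFDerivWithinAt H (F p) R p := fun p hp =>
    (hHdiff p hp).hasFDerivWithinAt
  have hFsm : ContDiffOn ℝ 1 F R := hsmooth.fderivWithin hRuniq (by norm_num)
  set F₂ : ℝ × ℝ → (ℝ × ℝ) →L[ℝ] (ℝ × ℝ) →L[ℝ] A := fderivWithin ℝ F R with hF₂def
  have hF₂ : ∀ p ∈ R, HasFDerivWithinAt F (F₂ p) R p := fun p hp =>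
    ((hFsm.differentiableOn one_ne_zero) p hp).hasFDerivWithinAt
  set inv : ℝ × ℝ → A := fun p => Ring.inverse (H p) with hinvdef
  have hinvC : ContinuousOn inv R := by
    intro p hp
    have h1 := NormedRing.inverse_continuousAt (hinv p hp).unit
    rw [IsUnit.unit_spec] at h1
    exact h1.comp_continuousWithinAt (hsmooth.continuousOn p hp)
  set Ht : ℝ × ℝ → A := fun p => F p (0, 1) with hHtdef
  set Hs : ℝ × ℝ → A := fun p => F p (1, 0) with hHsdef
  set gt' : ℝ × ℝ → ℂ := fun p => τ (Ht p * inv p) with hgtdef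
  set gs' : ℝ × ℝ → ℂ := fun p => τ (Hs p * inv p) with hgsdef
  set D : ℝ × ℝ → ℂ := fun p => τ (F₂ p (1, 0) (0, 1) * inv p) - τ (Ht p * inv p * (Hs p * inv p))
    with hDdef
  -- continuity facts
  have hFc : ContinuousOn F R := hFsm.continuousOn
  have hF₂c : ContinuousOn F₂ R := hFsm.continuousOn_fderivWithin hRuniq le_rfl
  have hHtc : ContinuousOn Ht R :=
    (ContinuousLinearMap.apply ℝ A ((0 : ℝ), (1 : ℝ))).continuous.comp_continuousOn hFc
  have hHsc : ContinuousOn Hs R :=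
    (ContinuousLinearMap.apply ℝ A ((1 : ℝ), (0 : ℝ))).continuous.comp_continuousOn hFc
  have hmixc : ContinuousOn (fun p => F₂ p (1, 0) (0, 1)) R :=
    (ContinuousLinearMap.apply ℝ A ((0 : ℝ), (1 : ℝ))).continuous.comp_continuousOn
      ((ContinuousLinearMap.apply ℝ ((ℝ × ℝ) →L[ℝ] A) ((1 : ℝ), (0 : ℝ))).continuous.comp_continuousOn
        hF₂c)
  have hgtc : ContinuousOn gt' R := τ.continuous.comp_continuousOn (hHtc.mul hinvC)
  have hgsc : ContinuousOn gs' R := τ.continuous.comp_continuousOn (hHsc.mul hinvC)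
  have hDc : ContinuousOn D R :=
    (τ.continuous.comp_continuousOn (hmixc.mul hinvC)).sub
      (τ.continuous.comp_continuousOn ((hHtc.mul hinvC).mul (hHsc.mul hinvC)))
  -- derivative of the inverse along the s-slice
  have hInvS : ∀ s ∈ Set.Ioo (0 : ℝ) 1, ∀ t ∈ Set.Icc t₁ t₂,
      HasDerivAt (fun s' => inv (s', t)) (-(inv (s, t) * Hs (s, t) * inv (s, t))) s := by
    intro s hs t htt
    have hp : (s, t) ∈ R := ⟨Ioo_subset_Icc_self hs, htt⟩
    have hA : HasDerivAt (fun s' => H (s', t)) (Hs (s, t)) s := slice_fst (hF _ hp) hs htt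
    have hu := (hinv _ hp).unit
    have h1 : HasFDerivAt Ring.inverse
        (-ContinuousLinearMap.mulLeftRight ℝ A ↑(hinv _ hp).unit⁻¹ ↑(hinv _ hp).unit⁻¹)
        (H (s, t)) := by
      have := hasFDerivAt_ringInverse (𝕜 := ℝ) (hinv _ hp).unit
      rwa [IsUnit.unit_spec] at this
    have h2 := h1.comp_hasDerivAt s hA
    have h3 : (↑(hinv _ hp).unit⁻¹ : A) = inv (s, t) := by
      rw [hinvdef]
      simp only [← Ring.inverse_unit (hinv _ hp).unit, IsUnit.unit_spec]
    refine h2.congr_deriv (Eq.symm ?_)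
    simp [h3, ContinuousLinearMap.mulLeftRight_apply, mul_assoc]
  -- derivative of gt' along the s-slice
  have hgtS : ∀ s ∈ Set.Ioo (0 : ℝ) 1, ∀ t ∈ Set.Icc t₁ t₂,
      HasDerivAt (fun s' => gt' (s', t)) (D (s, t)) s := by
    intro s hs t htt
    have hp : (s, t) ∈ R := ⟨Ioo_subset_Icc_self hs, htt⟩
    have hA : HasDerivAt (fun s' => F (s', t)) (F₂ (s, t) (1, 0)) s := slice_fst (hF₂ _ hp) hs htt
    have hHt' : HasDerivAt (fun s' => Ht (s', t)) (F₂ (s, t) (1, 0) (0, 1)) s :=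
      (ContinuousLinearMap.apply ℝ A ((0 : ℝ), (1 : ℝ))).hasFDerivAt.comp_hasDerivAt s hA
    have hI := hInvS s hs t htt
    have hmul := hHt'.mul hI
    have := (τ.restrictScalars ℝ).hasFDerivAt.comp_hasDerivAt s hmul
    refine this.congr_deriv (Eq.symm ?_)
    show D (s, t) = τ (F₂ (s, t) (1, 0) (0, 1) * inv (s, t)
      + Ht (s, t) * -(inv (s, t) * Hs (s, t) * inv (s, t)))
    rw [hDdef]
    simp only [map_add, mul_neg, map_neg, mul_assoc]
    ring
  -- derivative of gs' along the t-slice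
  have hgsT : ∀ s ∈ Set.Icc (0 : ℝ) 1, ∀ t ∈ Set.Ioo t₁ t₂,
      HasDerivAt (fun t' => gs' (s, t'))
        (τ (F₂ (s, t) (0, 1) (1, 0) * inv (s, t)) -
          τ (Hs (s, t) * inv (s, t) * (Ht (s, t) * inv (s, t)))) t := by
    intro s hs t htt
    have hp : (s, t) ∈ R := ⟨hs, Ioo_subset_Icc_self htt⟩
    have hA : HasDerivAt (fun t' => H (s, t')) (Ht (s, t)) t := slice_snd (hF _ hp) hs htt
    have hB : HasDerivAt (fun t' => F (s, t')) (F₂ (s, t) (0, 1)) t := slice_snd (hF₂ _ hp) hs htt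
    have hHs' : HasDerivAt (fun t' => Hs (s, t')) (F₂ (s, t) (0, 1) (1, 0)) t :=
      (ContinuousLinearMap.apply ℝ A ((1 : ℝ), (0 : ℝ))).hasFDerivAt.comp_hasDerivAt t hB
    have h1 : HasFDerivAt Ring.inverse
        (-ContinuousLinearMap.mulLeftRight ℝ A ↑(hinv _ hp).unit⁻¹ ↑(hinv _ hp).unit⁻¹)
        (H (s, t)) := by
      have := hasFDerivAt_ringInverse (𝕜 := ℝ) (hinv _ hp).unit
      rwa [IsUnit.unit_spec] at this
    have h3 : (↑(hinv _ hp).unit⁻¹ : A) = inv (s, t) := by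
      rw [hinvdef]
      simp only [← Ring.inverse_unit (hinv _ hp).unit, IsUnit.unit_spec]
    have hI : HasDerivAt (fun t' => inv (s, t')) (-(inv (s, t) * Ht (s, t) * inv (s, t))) t := by
      have h2 := h1.comp_hasDerivAt t hA
      refine h2.congr_deriv (Eq.symm ?_)
      simp [h3, ContinuousLinearMap.mulLeftRight_apply, mul_assoc]
    have hmul := hHs'.mul hI
    have := (τ.restrictScalars ℝ).hasFDerivAt.comp_hasDerivAt t hmul
    refine this.congr_deriv (Eq.symm ?_)
    show _ = τ (F₂ (s, t) (0, 1) (1, 0) * inv (s, t)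
      + Hs (s, t) * -(inv (s, t) * Ht (s, t) * inv (s, t)))
    simp only [map_add, mul_neg, map_neg, mul_assoc]
    ring
  -- interior identification of D with the t-derivative of gs'
  have hDE : ∀ s ∈ Set.Ioo (0 : ℝ) 1, ∀ t ∈ Set.Ioo t₁ t₂,
      τ (F₂ (s, t) (0, 1) (1, 0) * inv (s, t)) -
          τ (Hs (s, t) * inv (s, t) * (Ht (s, t) * inv (s, t))) = D (s, t) := by
    intro s hs t htt
    have hp : (s, t) ∈ R := ⟨Ioo_subset_Icc_self hs, Ioo_subset_Icc_self htt⟩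
    have hRnhds : R ∈ 𝓝 (s, t) := by
      rw [hRdef]
      exact prod_mem_nhds (Icc_mem_nhds hs.1 hs.2) (Icc_mem_nhds htt.1 htt.2)
    have hIopen : IsOpen (Set.Ioo (0 : ℝ) 1 ×ˢ Set.Ioo t₁ t₂) := isOpen_Ioo.prod isOpen_Ioo
    have hev : F =ᶠ[𝓝 (s, t)] fderiv ℝ H := by
      filter_upwards [hIopen.mem_nhds ⟨hs, htt⟩] with q hq
      have hq' : R ∈ 𝓝 q := by
        rw [hRdef]
        exact prod_mem_nhds (Icc_mem_nhds hq.1.1 hq.1.2) (Icc_mem_nhds hq.2.1 hq.2.2)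
      exact fderivWithin_of_mem_nhds hq'
    have hF₂eq : F₂ (s, t) = fderiv ℝ (fderiv ℝ H) (s, t) := by
      rw [hF₂def, fderivWithin_of_mem_nhds hRnhds, hev.fderiv_eq]
    have hsymm : IsSymmSndFDerivAt ℝ H (s, t) :=
      (hsmooth.contDiffAt hRnhds).isSymmSndFDerivAt (by simp)
    have hmix : F₂ (s, t) (0, 1) (1, 0) = F₂ (s, t) (1, 0) (0, 1) := by
      rw [hF₂eq]; exact hsymm _ _
    have htr : τ (Hs (s, t) * inv (s, t) * (Ht (s, t) * inv (s, t))) =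
        τ (Ht (s, t) * inv (s, t) * (Hs (s, t) * inv (s, t))) := hτ _ _
    rw [hDdef, hmix, htr]
  -- vanishing of Hs at the endpoints
  have hHs_end : ∀ s ∈ Set.Ioo (0 : ℝ) 1, Hs (s, t₁) = 0 ∧ Hs (s, t₂) = 0 := by
    intro s hs
    constructor
    · have hp : (s, t₁) ∈ R := ⟨Ioo_subset_Icc_self hs, left_mem_Icc.2 hlt.le⟩
      have hA : HasDerivAt (fun s' => H (s', t₁)) (Hs (s, t₁)) s :=
        slice_fst (hF _ hp) hs (left_mem_Icc.2 hlt.le)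
      have hconst : HasDerivAt (fun s' => H (s', t₁)) 0 s := by
        refine HasDerivAt.congr_of_eventuallyEq (hasDerivAt_const s (H (0, t₁))) ?_
        filter_upwards [Icc_mem_nhds hs.1 hs.2] with s' hs'
        exact hend₁ s' hs'
      exact hA.unique hconst
    · have hp : (s, t₂) ∈ R := ⟨Ioo_subset_Icc_self hs, right_mem_Icc.2 hlt.le⟩
      have hA : HasDerivAt (fun s' => H (s', t₂)) (Hs (s, t₂)) s :=
        slice_fst (hF _ hp) hs (right_mem_Icc.2 hlt.le)
      have hconst : HasDerivAt (fun s' => H (s', t₂)) 0 s := by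
        refine HasDerivAt.congr_of_eventuallyEq (hasDerivAt_const s (H (0, t₂))) ?_
        filter_upwards [Icc_mem_nhds hs.1 hs.2] with s' hs'
        exact hend₂ s' hs'
      exact hA.unique hconst
  -- FTC in s, for every t
  have key_t : ∀ t ∈ Set.Icc t₁ t₂,
      (∫ s in (0 : ℝ)..1, D (s, t)) = gt' (1, t) - gt' (0, t) := by
    intro t htt
    have hmaps : Set.MapsTo (fun s : ℝ => (s, t)) (Set.Icc 0 1) R := fun s hs => ⟨hs, htt⟩
    have hcont : ContinuousOn (fun s => gt' (s, t)) (Set.Icc 0 1) :=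
      hgtc.comp ((continuous_id.prodMk continuous_const).continuousOn) hmaps
    have hDcont : ContinuousOn (fun s => D (s, t)) (Set.Icc 0 1) :=
      hDc.comp ((continuous_id.prodMk continuous_const).continuousOn) hmaps
    refine intervalIntegral.integral_eq_sub_of_hasDeriv_right_of_le zero_le_one hcont
      (fun s hs => ((hgtS s hs t htt).hasDerivWithinAt)) ?_
    exact (hDcont.mono (by rw [Set.uIcc_of_le zero_le_one])).intervalIntegrable
  -- FTC in t, for interior s
  have key_s : ∀ s ∈ Set.Ioo (0 : ℝ) 1, (∫ t in t₁..t₂, D (s, t)) = 0 := by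
    intro s hs
    have hsIcc : s ∈ Set.Icc (0 : ℝ) 1 := Ioo_subset_Icc_self hs
    have hmaps : Set.MapsTo (fun t : ℝ => (s, t)) (Set.Icc t₁ t₂) R := fun t htt => ⟨hsIcc, htt⟩
    have hcont : ContinuousOn (fun t => gs' (s, t)) (Set.Icc t₁ t₂) :=
      hgsc.comp ((continuous_const.prodMk continuous_id).continuousOn) hmaps
    have hDcont : ContinuousOn (fun t => D (s, t)) (Set.Icc t₁ t₂) :=
      hDc.comp ((continuous_const.prodMk continuous_id).continuousOn) hmaps
    have hftc : (∫ t in t₁..t₂, D (s, t)) = gs' (s, t₂) - gs' (s, t₁) := by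
      refine intervalIntegral.integral_eq_sub_of_hasDeriv_right_of_le hlt.le hcont
        (fun t htt => ?_) ?_
      · have := hgsT s hsIcc t htt
        rw [hDE s hs t htt] at this
        exact this.hasDerivWithinAt
      · exact (hDcont.mono (by rw [Set.uIcc_of_le hlt.le])).intervalIntegrable
    rw [hftc, hgsdef]
    simp only [(hHs_end s hs).1, (hHs_end s hs).2, zero_mul, map_zero, sub_zero]
  -- Fubini
  have hDmeas : IntegrableOn (fun q : ℝ × ℝ => D (q.2, q.1)) (Set.Ioc t₁ t₂ ×ˢ Set.Ioc 0 1)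
      (volume.prod volume) := by
    have hcomp : ContinuousOn (fun q : ℝ × ℝ => D (q.2, q.1)) (Set.Icc t₁ t₂ ×ˢ Set.Icc 0 1) :=
      hDc.comp continuous_swap.continuousOn (fun q hq => ⟨hq.2, hq.1⟩)
    exact (hcomp.integrableOn_compact (isCompact_Icc.prod isCompact_Icc)).mono_set
      (Set.prod_mono Set.Ioc_subset_Icc_self Set.Ioc_subset_Icc_self)
  have fub : (∫ t in t₁..t₂, ∫ s in (0 : ℝ)..1, D (s, t)) =
      ∫ s in (0 : ℝ)..1, ∫ t in t₁..t₂, D (s, t) := by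
    rw [intervalIntegral.integral_of_le hlt.le, intervalIntegral.integral_of_le zero_le_one]
    have h1 : (∫ t in Set.Ioc t₁ t₂, ∫ s in (0 : ℝ)..1, D (s, t)) =
        ∫ t in Set.Ioc t₁ t₂, ∫ s in Set.Ioc (0 : ℝ) 1, D (s, t) :=
      setIntegral_congr_fun measurableSet_Ioc fun t _ =>
        intervalIntegral.integral_of_le zero_le_one
    have h2 : (∫ s in Set.Ioc (0 : ℝ) 1, ∫ t in t₁..t₂, D (s, t)) =
        ∫ s in Set.Ioc (0 : ℝ) 1, ∫ t in Set.Ioc t₁ t₂, D (s, t) :=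
      setIntegral_congr_fun measurableSet_Ioc fun s _ =>
        intervalIntegral.integral_of_le hlt.le
    rw [h1, h2]
    apply MeasureTheory.integral_integral_swap
    rw [Function.uncurry_def, Measure.prod_restrict]
    exact hDmeas
  -- conclude the integrals agree
  have hint0 : IntervalIntegrable (fun t => gt' (0, t)) volume t₁ t₂ := by
    refine ContinuousOn.intervalIntegrable ?_
    rw [Set.uIcc_of_le hlt.le]
    exact hgtc.comp ((continuous_const.prodMk continuous_id).continuousOn)
      (fun t htt => ⟨left_mem_Icc.2 zero_le_one, htt⟩)
  have hint1 : IntervalIntegrable (fun t => gt' (1, t)) volume t₁ t₂ := by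
    refine ContinuousOn.intervalIntegrable ?_
    rw [Set.uIcc_of_le hlt.le]
    exact hgtc.comp ((continuous_const.prodMk continuous_id).continuousOn)
      (fun t htt => ⟨right_mem_Icc.2 zero_le_one, htt⟩)
  have hmain : (∫ t in t₁..t₂, gt' (0, t)) = ∫ t in t₁..t₂, gt' (1, t) := by
    have hdiff : (∫ t in t₁..t₂, gt' (1, t)) - (∫ t in t₁..t₂, gt' (0, t)) =
        ∫ t in t₁..t₂, (gt' (1, t) - gt' (0, t)) := (intervalIntegral.integral_sub hint1 hint0).symm
    have heq : (∫ t in t₁..t₂, (gt' (1, t) - gt' (0, t))) =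
        ∫ t in t₁..t₂, ∫ s in (0 : ℝ)..1, D (s, t) := by
      refine intervalIntegral.integral_congr fun t htt => ?_
      rw [Set.uIcc_of_le hlt.le] at htt
      exact (key_t t htt).symm
    have hzero : (∫ s in (0 : ℝ)..1, ∫ t in t₁..t₂, D (s, t)) = 0 := by
      rw [intervalIntegral.integral_of_le zero_le_one, integral_Ioc_eq_integral_Ioo]
      rw [setIntegral_congr_fun measurableSet_Ioo (fun s hs => key_s s hs)]
      simp
    have : (∫ t in t₁..t₂, gt' (1, t)) - (∫ t in t₁..t₂, gt' (0, t)) = 0 := by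
      rw [hdiff, heq, fub, hzero]
    exact (sub_eq_zero.1 this).symm
  -- identify the integrands
  have hderiv_eq : ∀ s ∈ Set.Icc (0 : ℝ) 1, ∀ t ∈ Set.Icc t₁ t₂,
      derivWithin (fun t' => H (s, t')) (Set.Icc t₁ t₂) t = Ht (s, t) := by
    intro s hs t htt
    exact (slice_snd_within (hF (s, t) ⟨hs, htt⟩) hs htt).derivWithin
      (uniqueDiffOn_Icc hlt t htt)
  simp only [dhsDet]
  congr 1
  have e0 : (∫ t in t₁..t₂,
      τ (derivWithin (fun t' => H (0, t')) (Set.Icc t₁ t₂) t * Ring.inverse (H (0, t)))) =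
      ∫ t in t₁..t₂, gt' (0, t) := by
    refine intervalIntegral.integral_congr fun t htt => ?_
    rw [Set.uIcc_of_le hlt.le] at htt
    rw [hderiv_eq 0 (left_mem_Icc.2 zero_le_one) t htt]
  have e1 : (∫ t in t₁..t₂,
      τ (derivWithin (fun t' => H (1, t')) (Set.Icc t₁ t₂) t * Ring.inverse (H (1, t)))) =
      ∫ t in t₁..t₂, gt' (1, t) := by
    refine intervalIntegral.integral_congr fun t htt => ?_
    rw [Set.uIcc_of_le hlt.le] at htt
    rw [hderiv_eq 1 (right_mem_Icc.2 zero_le_one) t htt]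
  rw [e0, e1, hmain]
end

section
/- Let A be a unital complex Banach algebra and let a ∈ A satisfy ‖a − a²‖ < 1/4. Then every element λ of the spectrum of a satisfies Re λ ≠ 1/2; in other words, the spectrum of a is disjoint from the vertical line {z ∈ ℂ : Re z = 1/2}. -/
open Polynomial Filter
open scoped ENNReal NNReal

lemma spectralRadius_le_nnnorm' {A : Type*} [NormedRing A] [NormedAlgebra ℂ A]
    [CompleteSpace A] (b : A) : spectralRadius ℂ b ≤ (‖b‖₊ : ℝ≥0∞) := by
  refine le_of_tendsto (spectrum.pow_nnnorm_pow_one_div_tendsto_nhds_spectralRadius b) ?_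
  filter_upwards [Filter.eventually_ge_atTop 1] with n hn
  have hn' : (n : ℝ) ≠ 0 := by exact_mod_cast Nat.one_le_iff_ne_zero.mp hn
  calc (‖b ^ n‖₊ : ℝ≥0∞) ^ (1 / n : ℝ)
      ≤ ((‖b‖₊ : ℝ≥0∞) ^ n) ^ (1 / n : ℝ) := by
        gcongr
        exact_mod_cast nnnorm_pow_le' b hn
    _ = (‖b‖₊ : ℝ≥0∞) := by
        rw [← ENNReal.rpow_natCast, ← ENNReal.rpow_mul, mul_one_div,
          div_self hn', ENNReal.rpow_one]

/-- If `a` is an element of a unital complex Banach algebra with `‖a - a²‖ < 1/4`, then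
the spectrum of `a` is disjoint from the vertical line `{Re z = 1/2}`. -/
theorem statement6 {A : Type*} [NormedRing A] [NormedAlgebra ℂ A] [CompleteSpace A]
    (a : A) (h : ‖a - a ^ 2‖ < 1 / 4) :
    ∀ z ∈ spectrum ℂ a, z.re ≠ 1 / 2 := by
  intro z hz hre
  have hw : z - z ^ 2 ∈ spectrum ℂ (a - a ^ 2) := by
    have key := spectrum.subset_polynomial_aeval a (X - X ^ 2 : ℂ[X]) ⟨z, hz, rfl⟩
    simpa using key
  have h1 : (‖z - z ^ 2‖₊ : ℝ≥0∞) ≤ spectralRadius ℂ (a - a ^ 2) :=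
    le_iSup₂ (f := fun k (_ : k ∈ spectrum ℂ (a - a ^ 2)) => (‖k‖₊ : ℝ≥0∞)) _ hw
  have h2 : ‖z - z ^ 2‖ ≤ ‖a - a ^ 2‖ := by
    have := h1.trans (spectralRadius_le_nnnorm' (a - a ^ 2))
    exact_mod_cast this
  have hre2 : (z - z ^ 2).re = 1 / 4 + z.im ^ 2 := by
    simp [pow_two, Complex.sub_re, Complex.mul_re, hre]
    ring
  have h3 : (1 / 4 : ℝ) ≤ ‖z - z ^ 2‖ := by
    calc (1 / 4 : ℝ) ≤ 1 / 4 + z.im ^ 2 := by nlinarith [sq_nonneg z.im]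
      _ = (z - z ^ 2).re := hre2.symm
      _ ≤ |(z - z ^ 2).re| := le_abs_self _
      _ ≤ ‖z - z ^ 2‖ := Complex.abs_re_le_norm _
  linarith
end

section
/- Let g ≥ 1, let κ_0 = 1 and κ_k = ∏_{j=1}^k [α_j, β_j] ∈ Γ_g for 1 ≤ k ≤ g, and let F₀ ⊆ Γ_g be the finite symmetric set consisting of the elements α_k^{±1}, β_k^{±1}, κ_{k−1}^{±1}, (κ_{k−1}α_k)^{±1}, (κ_{k−1}α_kβ_k)^{±1} and (κ_{k−1}α_kβ_kα_k⁻¹)^{±1} for k = 1, …, g. Then there exists a constant C > 0 depending only on g such that for every unital C*-algebra A, every ε > 0 and every (F₀, ε)-representation π : Γ_g → U(A), one has ‖∏_{k=1}^g [π(α_k), π(β_k)] − 1‖ ≤ C·ε. -/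
open scoped commutatorElement


/-- The partial product of commutators `κ_k = ∏_{j=1}^k [α_j, β_j]` (so `κ_0 = 1`). -/
def sgKappa {g : ℕ} (k : ℕ) : SurfaceGroup g :=
  (((List.ofFn fun j : Fin g => ⁅sgA j, sgB j⁆).take k)).prod

/-- The finite symmetric subset `F₀ ⊆ Γ_g` consisting of
`α_k^{±1}, β_k^{±1}, κ_{k-1}^{±1}, (κ_{k-1} α_k)^{±1}, (κ_{k-1} α_k β_k)^{±1},
(κ_{k-1} α_k β_k α_k⁻¹)^{±1}` for `k = 1, …, g` (here `k : Fin g` is the 0-based index,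
so `sgKappa k.val = κ_{k-1}`). -/
def F0 (g : ℕ) : Set (SurfaceGroup g) :=
  ⋃ k : Fin g,
    {x | x = sgA k ∨ x = (sgA k)⁻¹ ∨ x = sgB k ∨ x = (sgB k)⁻¹ ∨
      x = sgKappa k.val ∨ x = (sgKappa (g := g) k.val)⁻¹ ∨
      x = sgKappa k.val * sgA k ∨ x = (sgKappa k.val * sgA k)⁻¹ ∨
      x = sgKappa k.val * sgA k * sgB k ∨ x = (sgKappa k.val * sgA k * sgB k)⁻¹ ∨
      x = sgKappa k.val * sgA k * sgB k * (sgA k)⁻¹ ∨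
      x = (sgKappa k.val * sgA k * sgB k * (sgA k)⁻¹)⁻¹}

/- ### Auxiliary lemmas -/

lemma sgKappa_top (g : ℕ) : (sgKappa g : SurfaceGroup g) = 1 := by
  have h : (sgKappa g : SurfaceGroup g) =
      (QuotientGroup.mk' (Subgroup.normalClosure {surfaceRelator g})) (surfaceRelator g) := by
    unfold sgKappa surfaceRelator
    rw [List.take_of_length_le (by simp), map_list_prod, List.map_ofFn]
    congr 1
  rw [h, QuotientGroup.mk'_apply]
  show ((surfaceRelator g : FreeGroup (Fin g × Bool)) :
    FreeGroup (Fin g × Bool) ⧸ Subgroup.normalClosure {surfaceRelator g}) = 1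
  rw [QuotientGroup.eq_one_iff]
  exact Subgroup.subset_normalClosure rfl

lemma tri3 {A : Type*} [NormedRing A] (x y z : A) : ‖x - z‖ ≤ ‖x - y‖ + ‖y - z‖ := by
  simpa [dist_eq_norm] using dist_triangle x y z

lemma coe_inv_unitary {A : Type*} [Monoid A] [StarMul A] (u : unitary A) :
    ((u⁻¹ : unitary A) : A) = star (u : A) := by
  rw [← Unitary.star_eq_inv, Unitary.coe_star]

/-- There is a constant `C > 0` depending only on `g` such that for every unital C*-algebra
`A`, every `ε > 0` and every `(F₀, ε)`-representation `π : Γ_g → U(A)`,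
`‖∏_{k=1}^g [π(α_k), π(β_k)] - 1‖ ≤ C ε`. -/
theorem statement9 (g : ℕ) (hg : 1 ≤ g) :
    ∃ C > (0 : ℝ),
      ∀ (A : Type*) [NormedRing A] [StarRing A] [CStarRing A] [NormedAlgebra ℂ A]
        [CompleteSpace A] [StarModule ℂ A],
        ∀ ε : ℝ, 0 < ε → ∀ π : SurfaceGroup g → unitary A,
          IsQuasiRep (F0 g) ε π →
          ‖(((List.ofFn fun k : Fin g => ⁅π (sgA k), π (sgB k)⁆).prod : unitary A) : A) - 1‖ ≤
            C * ε := by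
  refine ⟨6 * g, by positivity, ?_⟩
  intro A _ _ _ _ _ _ ε hε π hπ
  rcases subsingleton_or_nontrivial A with hA | hA
  · have h0 : (((List.ofFn fun k : Fin g => ⁅π (sgA k), π (sgB k)⁆).prod : unitary A) : A) - 1
        = 0 := Subsingleton.elim _ _
    rw [h0, norm_zero]; positivity
  obtain ⟨hπ1, hπinv, hπmul⟩ := hπ
  set UL : List (unitary A) := List.ofFn fun k : Fin g => ⁅π (sgA k), π (sgB k)⁆ with hUL
  have hlen : UL.length = g := by simp [hUL]
  have claim : ∀ k : ℕ, k ≤ g →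
      ‖(π (sgKappa k) : A) - (((UL.take k).prod : unitary A) : A)‖ ≤ 6 * k * ε := by
    intro k
    induction k with
    | zero =>
      intro _
      have h1 : (sgKappa 0 : SurfaceGroup g) = 1 := by simp [sgKappa]
      simp [h1, hπ1]
    | succ k ih =>
      intro hk1
      have hk : k < g := hk1
      have ihk := ih (le_of_lt hk)
      set kf : Fin g := ⟨k, hk⟩ with hkf
      -- membership facts
      have mem : ∀ x : SurfaceGroup g,
          (x = sgA kf ∨ x = (sgA kf)⁻¹ ∨ x = sgB kf ∨ x = (sgB kf)⁻¹ ∨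
            x = sgKappa kf.val ∨ x = (sgKappa (g := g) kf.val)⁻¹ ∨
            x = sgKappa kf.val * sgA kf ∨ x = (sgKappa kf.val * sgA kf)⁻¹ ∨
            x = sgKappa kf.val * sgA kf * sgB kf ∨
            x = (sgKappa kf.val * sgA kf * sgB kf)⁻¹ ∨
            x = sgKappa kf.val * sgA kf * sgB kf * (sgA kf)⁻¹ ∨
            x = (sgKappa kf.val * sgA kf * sgB kf * (sgA kf)⁻¹)⁻¹) → x ∈ F0 g := by
        intro x hx
        exact Set.mem_iUnion.2 ⟨kf, hx⟩
      have mA : sgA kf ∈ F0 g := mem _ (Or.inl rfl)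
      have mAi : (sgA kf)⁻¹ ∈ F0 g := mem _ (Or.inr (Or.inl rfl))
      have mB : sgB kf ∈ F0 g := mem _ (Or.inr (Or.inr (Or.inl rfl)))
      have mBi : (sgB kf)⁻¹ ∈ F0 g := mem _ (Or.inr (Or.inr (Or.inr (Or.inl rfl))))
      have mK : (sgKappa k : SurfaceGroup g) ∈ F0 g :=
        mem _ (Or.inr (Or.inr (Or.inr (Or.inr (Or.inl rfl)))))
      have mKA : (sgKappa k * sgA kf : SurfaceGroup g) ∈ F0 g :=
        mem _ (Or.inr (Or.inr (Or.inr (Or.inr (Or.inr (Or.inr (Or.inl rfl)))))))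
      have mKAB : (sgKappa k * sgA kf * sgB kf : SurfaceGroup g) ∈ F0 g :=
        mem _ (Or.inr (Or.inr (Or.inr (Or.inr (Or.inr (Or.inr (Or.inr (Or.inr
          (Or.inl rfl)))))))))
      have mKABA : (sgKappa k * sgA kf * sgB kf * (sgA kf)⁻¹ : SurfaceGroup g) ∈ F0 g :=
        mem _ (Or.inr (Or.inr (Or.inr (Or.inr (Or.inr (Or.inr (Or.inr (Or.inr (Or.inr
          (Or.inr (Or.inl rfl)))))))))))
      -- abbreviations
      set a : A := (π (sgA kf) : A) with ha
      set b : A := (π (sgB kf) : A) with hb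
      set u0 : A := (π (sgKappa k) : A) with hu0
      set u1 : A := (π (sgKappa k * sgA kf) : A) with hu1
      set u2 : A := (π (sgKappa k * sgA kf * sgB kf) : A) with hu2
      set u3 : A := (π (sgKappa k * sgA kf * sgB kf * (sgA kf)⁻¹) : A) with hu3
      set pA : A := (π ((sgA kf)⁻¹) : A) with hpA
      set pB : A := (π ((sgB kf)⁻¹) : A) with hpB
      -- norms of unitaries
      have na : ‖a‖ = 1 := CStarRing.norm_coe_unitary _
      have nb : ‖b‖ = 1 := CStarRing.norm_coe_unitary _
      have nsa : ‖star a‖ = 1 := by rw [norm_star]; exact na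
      have nsb : ‖star b‖ = 1 := by rw [norm_star]; exact nb
      have nu2 : ‖u2‖ = 1 := CStarRing.norm_coe_unitary _
      have nu3 : ‖u3‖ = 1 := CStarRing.norm_coe_unitary _
      -- approximation facts
      have e1 : ‖u1 - u0 * a‖ < ε := hπmul _ mK _ mA
      have e2 : ‖u2 - u1 * b‖ < ε := hπmul _ mKA _ mB
      have e3 : ‖u3 - u2 * pA‖ < ε := hπmul _ mKAB _ mAi
      have e4 : ‖(π (sgKappa k * sgA kf * sgB kf * (sgA kf)⁻¹ * (sgB kf)⁻¹) : A) - u3 * pB‖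
          < ε := hπmul _ mKABA _ mBi
      have e5 : ‖pA - star a‖ < ε := hπinv _ mA
      have e6 : ‖pB - star b‖ < ε := hπinv _ mB
      -- group identity
      have hkap : (sgKappa (k + 1) : SurfaceGroup g) =
          sgKappa k * sgA kf * sgB kf * (sgA kf)⁻¹ * (sgB kf)⁻¹ := by
        unfold sgKappa
        rw [List.prod_take_succ _ k (by simpa using hk)]
        simp only [List.getElem_ofFn]
        rw [commutatorElement_def]
        group
        rfl
      rw [hkap] at *
      set u4 : A := (π (sgKappa k * sgA kf * sgB kf * (sgA kf)⁻¹ * (sgB kf)⁻¹) : A) with hu4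
      -- the chain of estimates
      have h2 : ‖u2 - u0 * a * b‖ ≤ 2 * ε := by
        have t1 : ‖u1 * b - u0 * a * b‖ ≤ ‖u1 - u0 * a‖ * ‖b‖ := by
          rw [← sub_mul]; exact norm_mul_le _ _
        have := tri3 u2 (u1 * b) (u0 * a * b)
        rw [nb, mul_one] at t1
        linarith
      have h3 : ‖u3 - u0 * a * b * star a‖ ≤ 4 * ε := by
        have t1 : ‖u2 * pA - u2 * star a‖ ≤ ‖u2‖ * ‖pA - star a‖ := by
          rw [← mul_sub]; exact norm_mul_le _ _
        have t2 : ‖u2 * star a - u0 * a * b * star a‖ ≤ ‖u2 - u0 * a * b‖ * ‖star a‖ := by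
          rw [← sub_mul]; exact norm_mul_le _ _
        have tr1 := tri3 u3 (u2 * pA) (u0 * a * b * star a)
        have tr2 := tri3 (u2 * pA) (u2 * star a) (u0 * a * b * star a)
        rw [nu2, one_mul] at t1
        rw [nsa, mul_one] at t2
        linarith
      have h4 : ‖u4 - u0 * a * b * star a * star b‖ ≤ 6 * ε := by
        have t1 : ‖u3 * pB - u3 * star b‖ ≤ ‖u3‖ * ‖pB - star b‖ := by
          rw [← mul_sub]; exact norm_mul_le _ _
        have t2 : ‖u3 * star b - u0 * a * b * star a * star b‖ ≤
            ‖u3 - u0 * a * b * star a‖ * ‖star b‖ := by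
          rw [← sub_mul]; exact norm_mul_le _ _
        have tr1 := tri3 u4 (u3 * pB) (u0 * a * b * star a * star b)
        have tr2 := tri3 (u3 * pB) (u3 * star b) (u0 * a * b * star a * star b)
        rw [nu3, one_mul] at t1
        rw [nsb, mul_one] at t2
        linarith
      -- identify the target product
      have hprod : (((UL.take (k + 1)).prod : unitary A) : A) =
          (((UL.take k).prod : unitary A) : A) * (a * b * star a * star b) := by
        rw [List.prod_take_succ _ k (by rw [hlen]; exact hk)]
        push_cast [Submonoid.coe_mul]
        congr 1
        have : UL[k]'(by rw [hlen]; exact hk) = ⁅π (sgA kf), π (sgB kf)⁆ := by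
          simp [hUL, List.getElem_ofFn]
          rfl
        rw [this, commutatorElement_def]
        push_cast [Submonoid.coe_mul, coe_inv_unitary]
        rw [← ha, ← hb]
      set T : A := (((UL.take k).prod : unitary A) : A) with hT
      have nc : ‖a * b * star a * star b‖ = 1 := by
        have : a * b * star a * star b = ((⁅π (sgA kf), π (sgB kf)⁆ : unitary A) : A) := by
          rw [commutatorElement_def]
          push_cast [Submonoid.coe_mul, coe_inv_unitary]
          rw [← ha, ← hb]
        rw [this]; exact CStarRing.norm_coe_unitary _
      have hfin : ‖u0 * a * b * star a * star b - T * (a * b * star a * star b)‖ ≤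
          6 * k * ε := by
        have heq : u0 * a * b * star a * star b - T * (a * b * star a * star b) =
            (u0 - T) * (a * b * star a * star b) := by noncomm_ring
        rw [heq]
        calc ‖(u0 - T) * (a * b * star a * star b)‖ ≤
            ‖u0 - T‖ * ‖a * b * star a * star b‖ := norm_mul_le _ _
          _ = ‖u0 - T‖ := by rw [nc, mul_one]
          _ ≤ 6 * k * ε := ihk
      rw [hprod]
      have tr := tri3 u4 (u0 * a * b * star a * star b) (T * (a * b * star a * star b))
      push_cast
      linarith
  have key := claim g le_rfl
  have htake : UL.take g = UL := List.take_of_length_le (by rw [hlen])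
  rw [htake, sgKappa_top, hπ1] at key
  have : ‖(((UL.prod : unitary A) : A)) - 1‖ = ‖(1 : A) - ((UL.prod : unitary A) : A)‖ :=
    norm_sub_rev _ _
  rw [← hUL] at *
  rw [this]
  calc ‖(1 : A) - ((UL.prod : unitary A) : A)‖ ≤ 6 * g * ε := by
        simpa using key
    _ = 6 * g * ε := rfl
end

section
/- Let A be a unital C*-algebra, τ a trace on A, and let w, z ∈ U(A) be unitaries with ‖w − 1‖ < 1. Define the path ξ(t) = (1−t)z + t·wz for t ∈ [0, 1]. Then every ξ(t) is invertible and Δ̃_τ(ξ) = (1/2πi) · τ(log w). -/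
/-- Let `w, z` be unitaries in a unital C*-algebra with a trace `τ` and `‖w - 1‖ < 1`, and let
`ξ(t) = (1-t)z + t·wz` for `t ∈ [0,1]`. Then every `ξ(t)` is invertible and
`Δ̃_τ(ξ) = (1/2πi) τ(log w)`. -/
theorem statement13 {A : Type*} [NormedRing A] [StarRing A] [CStarRing A]
    [NormedAlgebra ℂ A] [CompleteSpace A] [StarModule ℂ A]
    (τ : A →L[ℂ] ℂ) (hτ : ∀ a b : A, τ (a * b) = τ (b * a))
    (w z : unitary A) (hw : ‖(w : A) - 1‖ < 1) :
    (∀ t ∈ Set.Icc (0 : ℝ) 1, IsUnit ((1 - t) • (z : A) + t • ((w : A) * (z : A)))) ∧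
    dhsDet τ 0 1 (fun t => (1 - t) • (z : A) + t • ((w : A) * (z : A)))
        (fun _ => (w : A) * (z : A) - (z : A)) =
      (2 * (Real.pi : ℂ) * Complex.I)⁻¹ * τ (balog (w : A)) := by
  classical
  set a : A := (w : A) - 1 with ha_def
  have ha : ‖a‖ < 1 := hw
  have ha0 : (0:ℝ) ≤ ‖a‖ := norm_nonneg a
  have hxi : ∀ t : ℝ, (1 - t) • (z : A) + t • ((w : A) * (z : A)) = (1 + t • a) * (z : A) := by
    intro t
    rw [ha_def, add_mul, one_mul, smul_mul_assoc, sub_mul, one_mul, smul_sub, sub_smul, one_smul]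
    abel
  have hnorm : ∀ t ∈ Set.Icc (0:ℝ) 1, ‖-(t • a)‖ < 1 := by
    intro t ht
    rw [norm_neg, norm_smul, Real.norm_eq_abs]
    have h1 : |t| ≤ 1 := abs_le.2 ⟨by linarith [ht.1], ht.2⟩
    calc |t| * ‖a‖ ≤ 1 * ‖a‖ := mul_le_mul_of_nonneg_right h1 ha0
    _ = ‖a‖ := one_mul _
    _ < 1 := ha
  have hunit : ∀ t ∈ Set.Icc (0:ℝ) 1, IsUnit (1 + t • a) := by
    intro t ht
    have := isUnit_one_sub_of_norm_lt_one (hnorm t ht)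
    rwa [sub_neg_eq_add] at this
  -- the coefficients
  set T : ℕ → ℂ := fun n => τ (a ^ (n+1)) with hT
  set c : ℕ → ℂ := fun n => (-1) ^ n * ((n:ℂ)+1)⁻¹ with hcdef
  set G : ℝ → ℂ := fun t => ∑' n : ℕ, (c n * T n) * (t:ℂ)^(n+1) with hG
  set F' : ℕ → ℝ → ℂ := fun n t => ((-1:ℂ)^n * (t:ℂ)^n) * T n with hF'
  -- the radius
  set r : ℝ := 2 / (1 + ‖a‖) with hr
  have hden : (0:ℝ) < 1 + ‖a‖ := by linarith
  have hr1 : 1 < r := by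
    rw [hr, lt_div_iff₀ hden]; linarith
  have hra : r * ‖a‖ < 1 := by
    rw [hr, div_mul_eq_mul_div, div_lt_iff₀ hden]; linarith
  have hra0 : (0:ℝ) ≤ r * ‖a‖ := by positivity
  set u : ℕ → ℝ := fun n => (‖τ‖ * ‖a‖) * (r * ‖a‖)^n with hu
  have hu_sum : Summable u := (summable_geometric_of_lt_one hra0 hra).mul_left _
  have hTn : ∀ n : ℕ, ‖T n‖ ≤ ‖τ‖ * ‖a‖^(n+1) := by
    intro n
    calc ‖T n‖ ≤ ‖τ‖ * ‖a ^ (n+1)‖ := τ.le_opNorm _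
    _ ≤ ‖τ‖ * ‖a‖^(n+1) :=
      mul_le_mul_of_nonneg_left (norm_pow_le' a n.succ_pos) (norm_nonneg _)
  have hb : ∀ (n : ℕ), ∀ y ∈ Set.Ioo (-r) r, ‖F' n y‖ ≤ u n := by
    intro n y hy
    have hyr : |y| ≤ r := le_of_lt (abs_lt.2 ⟨hy.1, hy.2⟩)
    have hy0 : (0:ℝ) ≤ |y| := abs_nonneg y
    have h1 : ‖F' n y‖ = |y|^n * ‖T n‖ := by
      simp [hF', norm_mul, norm_pow, Complex.norm_real, Real.norm_eq_abs]
    rw [h1, hu]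
    calc |y|^n * ‖T n‖ ≤ r^n * (‖τ‖ * ‖a‖^(n+1)) := by
          apply mul_le_mul (pow_le_pow_left₀ hy0 hyr n) (hTn n) (norm_nonneg _)
          positivity
    _ = (‖τ‖ * ‖a‖) * (r * ‖a‖)^n := by rw [mul_pow, pow_succ]; ring
  have hderiv : ∀ (n : ℕ) (y : ℝ),
      HasDerivAt (fun x : ℝ => (c n * T n) * (x:ℂ)^(n+1)) (F' n y) y := by
    intro n y
    have h1 : HasDerivAt (fun x : ℂ => (c n * T n) * x^(n+1))
        ((c n * T n) * ((n+1 : ℕ) * (y:ℂ)^n)) (y:ℂ) := by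
      simpa using (hasDerivAt_pow (n+1) (y:ℂ)).const_mul (c n * T n)
    have h2 := h1.comp_ofReal
    convert h2 using 1
    have hne : ((n:ℂ)+1) ≠ 0 := Nat.cast_add_one_ne_zero n
    rw [hF', hcdef]
    push_cast
    field_simp
  have h0mem : (0:ℝ) ∈ Set.Ioo (-r) r := ⟨by linarith, by linarith⟩
  have hG0sum : Summable fun n : ℕ => (c n * T n) * (((0:ℝ)):ℂ)^(n+1) :=
    summable_zero.congr fun n => by simp
  have hGderiv : ∀ y ∈ Set.Ioo (-r) r, HasDerivAt G (∑' n, F' n y) y := by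
    intro y hy
    exact hasDerivAt_tsum_of_isPreconnected hu_sum isOpen_Ioo isPreconnected_Ioo
      (fun n x _ => hderiv n x) hb h0mem hG0sum hy
  have hsubset : Set.Icc (0:ℝ) 1 ⊆ Set.Ioo (-r) r := fun x hx =>
    ⟨by linarith [hx.1], by linarith [hx.2]⟩
  -- the integrand equals the series
  have hkey : ∀ t ∈ Set.Icc (0:ℝ) 1,
      τ (((w:A) * (z:A) - (z:A)) *
        Ring.inverse ((1 - t) • (z : A) + t • ((w : A) * (z : A)))) = ∑' n, F' n t := by
    intro t ht
    have hn := hnorm t ht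
    set u1 : Aˣ := Units.oneSub (-(t • a)) hn with hu1
    set u2 : Aˣ := Unitary.toUnits z with hu2
    have hval : (u1 : A) = 1 + t • a := by
      rw [hu1]; show 1 - -(t • a) = 1 + t • a; rw [sub_neg_eq_add]
    have hxi2 : (1 - t) • (z:A) + t • ((w:A)*(z:A)) = ↑(u1 * u2) := by
      rw [hxi t, Units.val_mul, hval]; rfl
    rw [hxi2, Ring.inverse_unit, mul_inv_rev, Units.val_mul]
    have hz1 : (z : A) * ↑(u2⁻¹) = 1 := u2.mul_inv
    have hwz : (w:A) * (z:A) - (z:A) = a * (z:A) := by rw [ha_def, sub_mul, one_mul]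
    have hstep : ((w:A) * (z:A) - (z:A)) * (↑(u2⁻¹) * ↑(u1⁻¹)) = a * ↑(u1⁻¹) := by
      rw [hwz, mul_assoc, ← mul_assoc (z:A), hz1, one_mul]
    rw [hstep]
    have hinv1 : (↑(u1⁻¹) : A) = ∑' n : ℕ, (-(t • a))^n := rfl
    rw [hinv1]
    have hsum : Summable (fun n : ℕ => (-(t • a))^n) := summable_geometric_of_norm_lt_one hn
    rw [← hsum.tsum_mul_left a, τ.map_tsum (hsum.mul_left a)]
    refine tsum_congr fun n => ?_
    have h1 : (-(t • a) : A) = (-(t:ℂ)) • a := by rw [← Complex.coe_smul, ← neg_smul]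
    rw [h1, smul_pow, mul_smul_comm, ← pow_succ', map_smul, smul_eq_mul, hF', neg_pow]
  -- continuity and integrability of the integrand
  have hcont : ContinuousOn (fun t : ℝ => τ (((w:A) * (z:A) - (z:A)) *
      Ring.inverse ((1 - t) • (z : A) + t • ((w : A) * (z : A))))) (Set.Icc 0 1) := by
    refine ContinuousOn.congr (continuousOn_tsum (fun n => ?_) hu_sum
      (fun n x hx => hb n x (hsubset hx))) hkey
    exact ((continuous_const.mul (Complex.continuous_ofReal.pow n)).mul
      continuous_const).continuousOn
  have huIcc : Set.uIcc (0:ℝ) 1 = Set.Icc 0 1 := Set.uIcc_of_le zero_le_one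
  have hInt : IntervalIntegrable (fun t : ℝ => τ (((w:A) * (z:A) - (z:A)) *
      Ring.inverse ((1 - t) • (z : A) + t • ((w : A) * (z : A)))))
      MeasureTheory.volume 0 1 := by
    apply ContinuousOn.intervalIntegrable
    rwa [huIcc]
  have hFTC : (∫ t in (0:ℝ)..1, τ (((w:A) * (z:A) - (z:A)) *
      Ring.inverse ((1 - t) • (z : A) + t • ((w : A) * (z : A))))) = G 1 - G 0 := by
    refine intervalIntegral.integral_eq_sub_of_hasDerivAt (fun t ht => ?_) hInt
    rw [huIcc] at ht
    rw [hkey t ht]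
    exact hGderiv t (hsubset ht)
  have hG0 : G 0 = 0 := by
    rw [hG]; simp
  -- summability of the balog series
  have hsum_balog : Summable (fun n : ℕ => (c n) • a^(n+1)) := by
    apply Summable.of_norm_bounded (g := fun n => ‖a‖ * ‖a‖^n)
    · exact (summable_geometric_of_lt_one ha0 ha).mul_left _
    · intro n
      rw [norm_smul]
      have hc1 : ‖c n‖ ≤ 1 := by
        rw [hcdef]
        simp only [norm_mul, norm_pow, norm_neg, norm_one, one_pow, one_mul, norm_inv]
        have : (1:ℝ) ≤ ‖(n:ℂ)+1‖ := by
          have : ((n:ℂ)+1) = ((n+1 : ℕ) : ℂ) := by push_cast; ring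
          rw [this, Complex.norm_natCast]
          exact_mod_cast Nat.one_le_iff_ne_zero.2 n.succ_ne_zero
        exact inv_le_one_of_one_le₀ this
      calc ‖c n‖ * ‖a^(n+1)‖ ≤ 1 * ‖a‖^(n+1) := by
            apply mul_le_mul hc1 (norm_pow_le' a n.succ_pos) (norm_nonneg _) zero_le_one
      _ = ‖a‖ * ‖a‖^n := by rw [one_mul, pow_succ']
  have hG1 : G 1 = τ (balog (w:A)) := by
    rw [balog, ← ha_def]
    rw [τ.map_tsum hsum_balog]
    rw [hG]
    refine tsum_congr fun n => ?_
    rw [map_smul, smul_eq_mul]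
    simp [hcdef, hT]
  refine ⟨fun t ht => ?_, ?_⟩
  · rw [hxi t]
    exact (hunit t ht).mul (Unitary.toUnits z).isUnit
  · simp only [dhsDet]
    rw [hFTC, hG0, sub_zero, hG1]
end
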